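/- arXiv:2003.00570 — 5 statements merged into one kernel-verified Lean document; each statement's English description precedes it below -/
import Mathlib

section
/- Let W ~ Hyp(p,s,s). If s = O(√p) (specifically, if there is a constant bound on s²/p suitably controlling the ratio), then there exists a universal constant C > 0 such that P[W = k] ≤ C·(s²/p)^k / k! for all 0 ≤ k ≤ s. -/
open Finset

/-- `P[W = k]` where `W = |S ∩ S'|` for `S, S'` independent uniformly random
size-`s` subsets of a `p`-element set (hypergeometric `Hyp(p,s,s)`). -/
noncomputable def hypProb (p s k : ℕ) : ℝ :=
  ((((Finset.powersetCard s (Finset.univ : Finset (Fin p))) ×ˢ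
      (Finset.powersetCard s (Finset.univ : Finset (Fin p)))).filter
        (fun SS => (SS.1 ∩ SS.2).card = k)).card : ℝ) / ((p.choose s : ℝ)) ^ 2

lemma hyp_count_le (p s k : ℕ) :
    (((Finset.powersetCard s (Finset.univ : Finset (Fin p))) ×ˢ
      (Finset.powersetCard s (Finset.univ : Finset (Fin p)))).filter
        (fun SS => (SS.1 ∩ SS.2).card = k)).card
      ≤ p.choose s * (s.choose k * (p - s).choose (s - k)) := by
  classical
  set P := Finset.powersetCard s (Finset.univ : Finset (Fin p)) with hP
  have hsub : ((P ×ˢ P).filter (fun SS => (SS.1 ∩ SS.2).card = k)) ⊆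
      P.biUnion (fun S => ({S} : Finset (Finset (Fin p))) ×ˢ
        (P.filter (fun S' => (S ∩ S').card = k))) := by
    intro x hx
    simp only [mem_filter, mem_product] at hx
    simp only [mem_biUnion, mem_product, mem_singleton, mem_filter]
    exact ⟨x.1, hx.1.1, rfl, hx.1.2, hx.2⟩
  refine (card_le_card hsub).trans (card_biUnion_le.trans ?_)
  have hbound : ∀ S ∈ P,
      (({S} : Finset (Finset (Fin p))) ×ˢ (P.filter (fun S' => (S ∩ S').card = k))).card
        ≤ s.choose k * (p - s).choose (s - k) := by
    intro S hS
    have hScard : S.card = s := (mem_powersetCard.1 hS).2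
    rw [card_product, card_singleton, one_mul]
    have hinj : (P.filter (fun S' => (S ∩ S').card = k)).card
        ≤ ((Finset.powersetCard k S) ×ˢ (Finset.powersetCard (s - k) Sᶜ)).card := by
      apply card_le_card_of_injOn (fun S' => (S ∩ S', S' \ S))
      · intro S' hS'
        simp only [Finset.mem_coe, mem_filter, hP, mem_powersetCard] at hS'
        obtain ⟨⟨-, hS'card⟩, hik⟩ := hS'
        simp only [Finset.mem_coe, mem_product, mem_powersetCard]
        refine ⟨⟨inter_subset_left, hik⟩, ?_, ?_⟩
        · intro x hx
          simp only [mem_sdiff] at hx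
          simp [mem_compl, hx.2]
        · have := card_sdiff_add_card_inter S' S
          rw [inter_comm S' S] at this
          omega
      · intro a ha b hb hab
        simp only [Prod.mk.injEq] at hab
        calc a = a \ S ∪ a ∩ S := (sdiff_union_inter a S).symm
          _ = b \ S ∪ b ∩ S := by
              rw [inter_comm a S, inter_comm b S, hab.1, hab.2]
          _ = b := sdiff_union_inter b S
    refine hinj.trans ?_
    rw [card_product, card_powersetCard, card_powersetCard, hScard, card_compl,
      Fintype.card_fin, hScard]
  calc ∑ S ∈ P, (({S} : Finset (Finset (Fin p))) ×ˢ
        (P.filter (fun S' => (S ∩ S').card = k))).card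
      ≤ ∑ _S ∈ P, s.choose k * (p - s).choose (s - k) := Finset.sum_le_sum hbound
    _ = P.card * (s.choose k * (p - s).choose (s - k)) := by rw [Finset.sum_const, smul_eq_mul]
    _ = p.choose s * (s.choose k * (p - s).choose (s - k)) := by
        rw [hP, card_powersetCard, card_univ, Fintype.card_fin]

lemma hypProb_le_one (p s k : ℕ) : hypProb p s k ≤ 1 := by
  unfold hypProb
  apply div_le_one_of_le₀
  · have h := card_filter_le ((Finset.powersetCard s (Finset.univ : Finset (Fin p))) ×ˢ
      (Finset.powersetCard s (Finset.univ : Finset (Fin p))))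
      (fun SS => (SS.1 ∩ SS.2).card = k)
    rw [card_product, card_powersetCard, card_univ, Fintype.card_fin] at h
    calc ((((Finset.powersetCard s (Finset.univ : Finset (Fin p))) ×ˢ
      (Finset.powersetCard s (Finset.univ : Finset (Fin p)))).filter
        (fun SS => (SS.1 ∩ SS.2).card = k)).card : ℝ)
        ≤ ((p.choose s * p.choose s : ℕ) : ℝ) := by exact_mod_cast h
      _ = ((p.choose s : ℝ)) ^ 2 := by push_cast; ring
  · positivity

set_option maxHeartbeats 1000000 in
/-- If `s = O(√p)` (i.e. `s² ≤ c·p`), then there is a constant `C > 0`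
(depending only on `c`) such that `P[W = k] ≤ C (s²/p)^k / k!` for all `k ≤ s`. -/
theorem hypProb_le_poisson_type_bound (c : ℝ) (hc : 0 < c) :
    ∃ C : ℝ, 0 < C ∧ ∀ p s k : ℕ, s ≤ p → (s : ℝ) ^ 2 ≤ c * p → k ≤ s →
      hypProb p s k ≤ C * ((s : ℝ) ^ 2 / (p : ℝ)) ^ k / (Nat.factorial k : ℝ) := by
  set C : ℝ := Real.exp (2 * c) + (2 : ℝ) ^ (2 * c) + 1 with hC
  have hexp : (0 : ℝ) < Real.exp (2 * c) := Real.exp_pos _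
  have hrpow : (0 : ℝ) < (2 : ℝ) ^ (2 * c) := Real.rpow_pos_of_pos (by norm_num) _
  have hCpos : 0 < C := by positivity
  refine ⟨C, hCpos, ?_⟩
  intro p s k hsp hs2 hks
  rcases Nat.eq_zero_or_pos k with hk0 | hk1
  · subst hk0
    simp only [pow_zero, Nat.factorial_zero, Nat.cast_one, mul_one, div_one]
    calc hypProb p s 0 ≤ 1 := hypProb_le_one p s 0
      _ ≤ C := by rw [hC]; linarith
  -- now k ≥ 1, hence s ≥ 1, p ≥ 1
  have hs1 : 1 ≤ s := le_trans hk1 hks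
  have hp1 : 1 ≤ p := le_trans hs1 hsp
  have hpR : (0 : ℝ) < (p : ℝ) := by exact_mod_cast hp1
  have hkfac : (0 : ℝ) < (Nat.factorial k : ℝ) := by
    exact_mod_cast Nat.factorial_pos k
  by_cases hcase : p < 2 * s
  · -- small case: p < 2s, so s < 2c and the trivial bound 1 suffices
    have hple : (p : ℝ) ≤ 2 * (s : ℝ) := by exact_mod_cast Nat.le_of_lt hcase
    have hsR : (0 : ℝ) < (s : ℝ) := by exact_mod_cast hs1
    have hs2c : (s : ℝ) ≤ 2 * c := by
      have h1 : (s : ℝ) * (s : ℝ) ≤ c * (2 * s) := by nlinarith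
      nlinarith
    have hk2c : (k : ℝ) ≤ 2 * c := le_trans (by exact_mod_cast hks) hs2c
    have h1 : (k : ℝ) / 2 ≤ (s : ℝ) ^ 2 / (p : ℝ) := by
      rw [div_le_div_iff₀ (by norm_num) hpR]
      have hkS : (k : ℝ) ≤ (s : ℝ) := by exact_mod_cast hks
      nlinarith
    have e1 : (Nat.factorial k : ℝ) / 2 ^ k ≤ ((s : ℝ) ^ 2 / (p : ℝ)) ^ k := by
      calc (Nat.factorial k : ℝ) / 2 ^ k ≤ (k : ℝ) ^ k / 2 ^ k := by
            apply div_le_div_of_nonneg_right ?_ (by positivity)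
            · exact_mod_cast Nat.factorial_le_pow k
        _ = ((k : ℝ) / 2) ^ k := by rw [div_pow]
        _ ≤ ((s : ℝ) ^ 2 / (p : ℝ)) ^ k := pow_le_pow_left₀ (by positivity) h1 k
    have h2k : (2 : ℝ) ^ k ≤ (2 : ℝ) ^ (2 * c) := by
      rw [← Real.rpow_natCast 2 k]
      exact Real.rpow_le_rpow_of_exponent_le one_le_two hk2c
    calc hypProb p s k ≤ 1 := hypProb_le_one p s k
      _ ≤ C / 2 ^ k := by
          rw [le_div_iff₀ (by positivity), one_mul, hC]
          linarith
      _ = C * ((Nat.factorial k : ℝ) / 2 ^ k) / (Nat.factorial k : ℝ) := by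
          field_simp
      _ ≤ C * ((s : ℝ) ^ 2 / (p : ℝ)) ^ k / (Nat.factorial k : ℝ) := by
          apply div_le_div_of_nonneg_right ?_ hkfac.le
          exact mul_le_mul_of_nonneg_left e1 hCpos.le
  · -- main case: 2s ≤ p
    push_neg at hcase
    have h2s : (2 : ℝ) * (s : ℝ) ≤ (p : ℝ) := by exact_mod_cast hcase
    have hch : (0 : ℝ) < (p.choose s : ℝ) := by exact_mod_cast Nat.choose_pos hsp
    have key : hypProb p s k ≤
        (s.choose k : ℝ) * ((p - s).choose (s - k) : ℝ) / (p.choose s : ℝ) := by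
      unfold hypProb
      have hN : ((((Finset.powersetCard s (Finset.univ : Finset (Fin p))) ×ˢ
          (Finset.powersetCard s (Finset.univ : Finset (Fin p)))).filter
            (fun SS => (SS.1 ∩ SS.2).card = k)).card : ℝ)
          ≤ (p.choose s : ℝ) * ((s.choose k : ℝ) * ((p - s).choose (s - k) : ℝ)) := by
        exact_mod_cast hyp_count_le p s k
      calc ((((Finset.powersetCard s (Finset.univ : Finset (Fin p))) ×ˢ
          (Finset.powersetCard s (Finset.univ : Finset (Fin p)))).filter
            (fun SS => (SS.1 ∩ SS.2).card = k)).card : ℝ) / ((p.choose s : ℝ)) ^ 2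
          ≤ ((p.choose s : ℝ) * ((s.choose k : ℝ) * ((p - s).choose (s - k) : ℝ)))
              / ((p.choose s : ℝ)) ^ 2 := by
            apply div_le_div_of_nonneg_right hN (by positivity)
        _ = (s.choose k : ℝ) * ((p - s).choose (s - k) : ℝ) / (p.choose s : ℝ) := by
            field_simp
    refine key.trans ?_
    -- notation
    set a : ℝ := (s.choose k : ℝ) with haEq
    set b : ℝ := ((p - s).choose (s - k) : ℝ) with hbEq
    set ch : ℝ := (p.choose s : ℝ) with hchEq
    -- key natural number identities
    have E0n : (s.choose k * ((p - s).choose (s - k)) * Nat.factorial k) * Nat.factorial s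
        = s.descFactorial k * s.descFactorial k *
            ((p - s).descFactorial (s - k)) := by
      conv_lhs => rw [← Nat.factorial_mul_descFactorial hks]
      rw [Nat.descFactorial_eq_factorial_mul_choose s k,
        Nat.descFactorial_eq_factorial_mul_choose (p - s) (s - k)]
      ring
    have E3n : p.choose s * Nat.factorial s = p.descFactorial s := by
      rw [Nat.descFactorial_eq_factorial_mul_choose]; ring
    -- part: p ≤ exp(2s/p) * (p+1-s)
    have hQcast : ((p + 1 - s : ℕ) : ℝ) = (p : ℝ) + 1 - (s : ℝ) := by
      have : s ≤ p + 1 := le_trans hsp (Nat.le_succ p)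
      push_cast [Nat.cast_sub this]
      ring
    have hQpos : (0 : ℝ) ≤ (p : ℝ) + 1 - (s : ℝ) := by
      have : (s : ℝ) ≤ (p : ℝ) := by exact_mod_cast hsp
      linarith
    have b4 : (p : ℝ) ≤ Real.exp (2 * (s : ℝ) / (p : ℝ)) * ((p : ℝ) + 1 - (s : ℝ)) := by
      have step1 : (p : ℝ) ≤ (1 + 2 * (s : ℝ) / (p : ℝ)) * ((p : ℝ) + 1 - (s : ℝ)) := by
        rw [show (1 + 2 * (s : ℝ) / (p : ℝ)) * ((p : ℝ) + 1 - (s : ℝ))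
            = ((p : ℝ) + 2 * s) * ((p : ℝ) + 1 - s) / p by field_simp,
          le_div_iff₀ hpR]
        have hsR : (0 : ℝ) ≤ (s : ℝ) := Nat.cast_nonneg s
        nlinarith
      refine step1.trans ?_
      apply mul_le_mul_of_nonneg_right ?_ hQpos
      have := Real.add_one_le_exp (2 * (s : ℝ) / (p : ℝ))
      linarith
    have b5 : (p : ℝ) ^ s ≤ Real.exp (2 * c) * ((p + 1 - s : ℕ) : ℝ) ^ s := by
      have hb4s : (p : ℝ) ^ s ≤
          (Real.exp (2 * (s : ℝ) / (p : ℝ)) * ((p : ℝ) + 1 - (s : ℝ))) ^ s :=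
        pow_le_pow_left₀ hpR.le b4 s
      rw [mul_pow, ← Real.exp_nat_mul] at hb4s
      have hexple : Real.exp ((s : ℕ) * (2 * (s : ℝ) / (p : ℝ))) ≤ Real.exp (2 * c) := by
        apply Real.exp_le_exp.2
        rw [show ((s : ℕ) : ℝ) * (2 * (s : ℝ) / (p : ℝ)) = 2 * (s : ℝ) ^ 2 / p by ring,
          div_le_iff₀ hpR]
        linarith
      rw [hQcast]
      calc (p : ℝ) ^ s ≤ Real.exp ((s : ℕ) * (2 * (s : ℝ) / (p : ℝ)))
            * ((p : ℝ) + 1 - (s : ℝ)) ^ s := hb4s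
        _ ≤ Real.exp (2 * c) * ((p : ℝ) + 1 - (s : ℝ)) ^ s := by
            apply mul_le_mul_of_nonneg_right hexple (by positivity)
    -- the main cast inequality
    have key2 : (s.descFactorial k : ℝ) * (s.descFactorial k : ℝ) *
        ((p - s).descFactorial (s - k) : ℝ) * (p : ℝ) ^ k
        ≤ Real.exp (2 * c) * ((s : ℝ) ^ 2) ^ k * (p.descFactorial s : ℝ) := by
      have b1 : (s.descFactorial k : ℝ) ≤ (s : ℝ) ^ k := by
        exact_mod_cast s.descFactorial_le_pow k
      have b2 : ((p - s).descFactorial (s - k) : ℝ) ≤ (p : ℝ) ^ (s - k) := by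
        calc ((p - s).descFactorial (s - k) : ℝ) ≤ ((p - s : ℕ) : ℝ) ^ (s - k) := by
              exact_mod_cast (p - s).descFactorial_le_pow (s - k)
          _ ≤ (p : ℝ) ^ (s - k) := by
              apply pow_le_pow_left₀ (by positivity)
              exact_mod_cast Nat.sub_le p s
      have b3 : ((p + 1 - s : ℕ) : ℝ) ^ s ≤ (p.descFactorial s : ℝ) := by
        exact_mod_cast Nat.pow_sub_le_descFactorial p s
      have hd1 : (0 : ℝ) ≤ (s.descFactorial k : ℝ) := Nat.cast_nonneg _
      have hd2 : (0 : ℝ) ≤ ((p - s).descFactorial (s - k) : ℝ) := Nat.cast_nonneg _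
      have hsq : ((s : ℝ) ^ 2) ^ k = (s : ℝ) ^ k * (s : ℝ) ^ k := by
        rw [← pow_mul, two_mul, pow_add]
      calc (s.descFactorial k : ℝ) * (s.descFactorial k : ℝ) *
            ((p - s).descFactorial (s - k) : ℝ) * (p : ℝ) ^ k
          ≤ (s : ℝ) ^ k * (s : ℝ) ^ k * (p : ℝ) ^ (s - k) * (p : ℝ) ^ k := by
            apply mul_le_mul_of_nonneg_right ?_ (by positivity)
            exact mul_le_mul (mul_le_mul b1 b1 hd1 (by positivity)) b2 hd2 (by positivity)
        _ = ((s : ℝ) ^ 2) ^ k * (p : ℝ) ^ s := by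
            have hps : (p : ℝ) ^ (s - k) * (p : ℝ) ^ k = (p : ℝ) ^ s := by
              rw [← pow_add, Nat.sub_add_cancel hks]
            rw [hsq, ← hps]; ring
        _ ≤ ((s : ℝ) ^ 2) ^ k * (Real.exp (2 * c) * ((p + 1 - s : ℕ) : ℝ) ^ s) := by
            apply mul_le_mul_of_nonneg_left b5 (by positivity)
        _ ≤ Real.exp (2 * c) * ((s : ℝ) ^ 2) ^ k * (p.descFactorial s : ℝ) := by
            rw [show ((s : ℝ) ^ 2) ^ k * (Real.exp (2 * c) * ((p + 1 - s : ℕ) : ℝ) ^ s)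
              = Real.exp (2 * c) * ((s : ℝ) ^ 2) ^ k * ((p + 1 - s : ℕ) : ℝ) ^ s by ring]
            apply mul_le_mul_of_nonneg_left b3 (by positivity)
    -- assemble
    have hsfac : (0 : ℝ) < (Nat.factorial s : ℝ) := by exact_mod_cast Nat.factorial_pos s
    have E0 : a * b * (Nat.factorial k : ℝ) * (Nat.factorial s : ℝ)
        = (s.descFactorial k : ℝ) * (s.descFactorial k : ℝ) *
            ((p - s).descFactorial (s - k) : ℝ) := by
      rw [haEq, hbEq]
      exact_mod_cast congrArg (Nat.cast : ℕ → ℝ) E0n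
    have E3 : ch * (Nat.factorial s : ℝ) = (p.descFactorial s : ℝ) := by
      rw [hchEq]
      exact_mod_cast congrArg (Nat.cast : ℕ → ℝ) E3n
    have target2 : a * b * (Nat.factorial k : ℝ) * (p : ℝ) ^ k
        ≤ C * ((s : ℝ) ^ 2) ^ k * ch := by
      rw [← mul_le_mul_iff_of_pos_right hsfac]
      calc a * b * (Nat.factorial k : ℝ) * (p : ℝ) ^ k * (Nat.factorial s : ℝ)
          = (a * b * (Nat.factorial k : ℝ) * (Nat.factorial s : ℝ)) * (p : ℝ) ^ k := by ring
        _ = (s.descFactorial k : ℝ) * (s.descFactorial k : ℝ) *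
            ((p - s).descFactorial (s - k) : ℝ) * (p : ℝ) ^ k := by rw [E0]
        _ ≤ Real.exp (2 * c) * ((s : ℝ) ^ 2) ^ k * (p.descFactorial s : ℝ) := key2
        _ ≤ C * ((s : ℝ) ^ 2) ^ k * (p.descFactorial s : ℝ) := by
            have h1 : Real.exp (2 * c) ≤ C := by rw [hC]; linarith
            have h2 : (0 : ℝ) ≤ ((s : ℝ) ^ 2) ^ k * (p.descFactorial s : ℝ) := by positivity
            calc Real.exp (2 * c) * ((s : ℝ) ^ 2) ^ k * (p.descFactorial s : ℝ)
                = Real.exp (2 * c) * (((s : ℝ) ^ 2) ^ k * (p.descFactorial s : ℝ)) := by ring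
              _ ≤ C * (((s : ℝ) ^ 2) ^ k * (p.descFactorial s : ℝ)) :=
                  mul_le_mul_of_nonneg_right h1 h2
              _ = C * ((s : ℝ) ^ 2) ^ k * (p.descFactorial s : ℝ) := by ring
        _ = C * ((s : ℝ) ^ 2) ^ k * ch * (Nat.factorial s : ℝ) := by rw [← E3]; ring
    rw [div_le_div_iff₀ hch hkfac, div_pow,
      show C * (((s : ℝ) ^ 2) ^ k / (p : ℝ) ^ k) * ch
        = C * ((s : ℝ) ^ 2) ^ k * ch / (p : ℝ) ^ k by ring,
      le_div_iff₀ (by positivity : (0 : ℝ) < (p : ℝ) ^ k)]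
    exact target2
end

section
/- Let Z₁,…,Z_s be independent with Z_i ~ N(μ_i, 1) and |μ_i| > √(2r log p) for all i. Then for 0 < τ < r and p sufficiently large, P[∑_{i=1}^s |Z_i| ≤ s·√(2τ log p)] ≤ 2^s · exp(−(√r − √τ)²·s·log p). -/
open MeasureTheory ProbabilityTheory
open scoped ENNReal NNReal Real

lemma lintegral_pi_prod_aux : ∀ (n : ℕ) (ν : Fin n → Measure ℝ),
    (∀ i, IsProbabilityMeasure (ν i)) →
    ∀ (f : Fin n → ℝ → ℝ≥0∞), (∀ i, Measurable (f i)) →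
    ∫⁻ z, ∏ i, f i (z i) ∂Measure.pi ν = ∏ i, ∫⁻ x, f i x ∂(ν i) := by
  intro n
  induction n with
  | zero =>
    intro ν _ f _
    rw [Measure.pi_of_empty]
    simp
  | succ n ih =>
    intro ν hν f hf
    haveI := fun i => hν i
    have hmp := (measurePreserving_piFinSuccAbove ν 0).symm
    have hF : Measurable fun z : Fin (n+1) → ℝ => ∏ i, f i (z i) :=
      Finset.measurable_prod _ fun i _ => (hf i).comp (measurable_pi_apply i)
    rw [← hmp.lintegral_comp hF]
    have key : ∀ y : ℝ × (Fin n → ℝ),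
        (∏ i, f i ((MeasurableEquiv.piFinSuccAbove (fun _ => ℝ) 0).symm y i))
          = f 0 y.1 * ∏ j, f j.succ (y.2 j) := by
      rintro ⟨a, b⟩
      rw [Fin.prod_univ_succ]
      simp [MeasurableEquiv.piFinSuccAbove, Fin.zero_succAbove]
    simp_rw [key]
    rw [lintegral_prod_mul (f := fun a => f 0 a)
      (g := fun b : Fin n → ℝ => ∏ j, f j.succ (b j)) ((hf 0).aemeasurable)
      ((Finset.measurable_prod Finset.univ fun j _ =>
        (hf j.succ).comp (measurable_pi_apply j)).aemeasurable)]
    simp_rw [Fin.zero_succAbove]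
    rw [ih _ (fun j => hν j.succ) _ (fun j => hf j.succ), Fin.prod_univ_succ]

lemma lintegral_exp_gaussian_std (t : ℝ) :
    ∫⁻ y, ENNReal.ofReal (Real.exp (t * y)) ∂(gaussianReal 0 1)
      = ENNReal.ofReal (Real.exp (t ^ 2 / 2)) := by
  rw [gaussianReal_of_var_ne_zero 0 one_ne_zero,
    lintegral_withDensity_eq_lintegral_mul _ (measurable_gaussianPDF 0 1)
      (by fun_prop : Measurable fun y : ℝ => ENNReal.ofReal (Real.exp (t * y)))]
  have key : ∀ y : ℝ, (gaussianPDF 0 1 * fun y => ENNReal.ofReal (Real.exp (t * y))) y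
      = ENNReal.ofReal (Real.exp (t ^ 2 / 2)) * gaussianPDF t 1 y := by
    intro y
    simp only [Pi.mul_apply, gaussianPDF, ← ENNReal.ofReal_mul (gaussianPDFReal_nonneg 0 1 y),
      ← ENNReal.ofReal_mul (Real.exp_nonneg _)]
    congr 1
    simp only [gaussianPDFReal, NNReal.coe_one, mul_one, sub_zero]
    rw [mul_assoc, ← Real.exp_add, mul_left_comm, ← Real.exp_add]
    congr 1
    ring_nf
  simp_rw [key]
  rw [lintegral_const_mul _ (measurable_gaussianPDF t 1), lintegral_gaussianPDF_eq_one t one_ne_zero,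
    mul_one]

lemma lintegral_exp_gaussian_shift (m t : ℝ) :
    ∫⁻ z, ENNReal.ofReal (Real.exp (t * (z - m))) ∂(gaussianReal m 1)
      = ENNReal.ofReal (Real.exp (t ^ 2 / 2)) := by
  have hmap : (gaussianReal 0 1).map (· + m) = gaussianReal m 1 := by
    rw [gaussianReal_map_add_const m, zero_add]
  rw [← hmap, lintegral_map (by fun_prop) (measurable_add_const m)]
  simp_rw [add_sub_cancel_right]
  exact lintegral_exp_gaussian_std t

lemma gauss_lap_bound (m t : ℝ) (ht : 0 ≤ t) :
    ∫⁻ z, ENNReal.ofReal (Real.exp (-(t * |z|))) ∂(gaussianReal m 1)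
      ≤ ENNReal.ofReal (2 * Real.exp (t ^ 2 / 2 - t * |m|)) := by
  have hpt : ∀ z : ℝ, Real.exp (-(t * |z|))
      ≤ Real.exp (-(t * |m|)) * (Real.exp (t * (z - m)) + Real.exp (-(t * (z - m)))) := by
    intro z
    have h1 : -(t * |z|) ≤ -(t * |m|) + t * |z - m| := by
      have : |m| ≤ |z| + |z - m| := by
        have := abs_sub_abs_le_abs_sub m z
        have h2 : |m - z| = |z - m| := abs_sub_comm m z
        linarith [abs_sub_abs_le_abs_sub m z, abs_sub_comm m z ▸ le_refl (|m - z|)]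
      nlinarith
    have h2 : Real.exp (t * |z - m|) ≤ Real.exp (t * (z - m)) + Real.exp (-(t * (z - m))) := by
      rcases abs_cases (z - m) with ⟨h, _⟩ | ⟨h, _⟩
      · rw [h]; linarith [Real.exp_nonneg (-(t * (z - m)))]
      · rw [h, mul_neg, ← neg_mul]
        linarith [Real.exp_nonneg (t * (z - m))]
    calc Real.exp (-(t * |z|)) ≤ Real.exp (-(t * |m|) + t * |z - m|) := Real.exp_le_exp.2 h1
      _ = Real.exp (-(t * |m|)) * Real.exp (t * |z - m|) := Real.exp_add _ _
      _ ≤ _ := by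
          have := Real.exp_nonneg (-(t * |m|))
          exact mul_le_mul_of_nonneg_left h2 this
  calc ∫⁻ z, ENNReal.ofReal (Real.exp (-(t * |z|))) ∂(gaussianReal m 1)
      ≤ ∫⁻ z, ENNReal.ofReal (Real.exp (-(t * |m|))
          * (Real.exp (t * (z - m)) + Real.exp (-(t * (z - m))))) ∂(gaussianReal m 1) :=
        lintegral_mono fun z => ENNReal.ofReal_le_ofReal (hpt z)
    _ = ENNReal.ofReal (Real.exp (-(t * |m|))) *
        (∫⁻ z, (ENNReal.ofReal (Real.exp (t * (z - m)))
          + ENNReal.ofReal (Real.exp (-(t * (z - m))))) ∂(gaussianReal m 1)) := by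
        rw [← lintegral_const_mul _ (by fun_prop)]
        congr 1 with z
        rw [ENNReal.ofReal_mul (Real.exp_nonneg _),
          ENNReal.ofReal_add (Real.exp_nonneg _) (Real.exp_nonneg _)]
    _ = ENNReal.ofReal (Real.exp (-(t * |m|))) *
        (ENNReal.ofReal (Real.exp (t ^ 2 / 2)) + ENNReal.ofReal (Real.exp ((-t) ^ 2 / 2))) := by
        rw [lintegral_add_left (by fun_prop), lintegral_exp_gaussian_shift m t]
        congr 1
        simp_rw [← neg_mul]
        rw [lintegral_exp_gaussian_shift m (-t)]
    _ = ENNReal.ofReal (2 * Real.exp (t ^ 2 / 2 - t * |m|)) := by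
        rw [neg_pow, ← ENNReal.ofReal_add (Real.exp_nonneg _) (Real.exp_nonneg _),
          ← ENNReal.ofReal_mul (Real.exp_nonneg _)]
        congr 1
        rw [show t ^ 2 / 2 - t * |m| = -(t * |m|) + t ^ 2 / 2 by ring, Real.exp_add]
        ring_nf

/-- For independent `Zᵢ ~ N(μᵢ,1)` with `|μᵢ| > √(2r log p)`, `0 < τ < r`, and
`p` sufficiently large, `P[∑|Zᵢ| ≤ s√(2τ log p)] ≤ 2^s exp(−(√r−√τ)² s log p)`. -/
theorem folded_normal_sum_lower_tail (r τ : ℝ) (hτ : 0 < τ) (hτr : τ < r) :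
    ∃ p₀ : ℝ, ∀ p : ℝ, p₀ ≤ p → ∀ s : ℕ, ∀ μ : Fin s → ℝ,
      (∀ i, Real.sqrt (2 * r * Real.log p) < |μ i|) →
      (Measure.pi fun i : Fin s => gaussianReal (μ i) 1)
          {z | ∑ i, |z i| ≤ (s : ℝ) * Real.sqrt (2 * τ * Real.log p)} ≤
        ENNReal.ofReal ((2 : ℝ) ^ s *
          Real.exp (-((Real.sqrt r - Real.sqrt τ) ^ 2 * s * Real.log p))) := by
  refine ⟨1, fun p hp s μ hμ => ?_⟩
  have h0r : (0:ℝ) < r := hτ.trans hτr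
  set L := Real.log p with hLdef
  have hL0 : 0 ≤ L := Real.log_nonneg hp
  set u := Real.sqrt (2 * L) with hudef
  have hu2 : u ^ 2 = 2 * L := Real.sq_sqrt (by linarith)
  have hu0 : 0 ≤ u := Real.sqrt_nonneg _
  set sr := Real.sqrt r with hsrdef
  set st := Real.sqrt τ with hstdef
  have hsts : st ≤ sr := Real.sqrt_le_sqrt hτr.le
  set t := (sr - st) * u with htdef
  have ht0 : 0 ≤ t := mul_nonneg (by linarith) hu0
  have ha : Real.sqrt (2 * τ * L) = st * u := by
    rw [hstdef, hudef, show 2 * τ * L = τ * (2 * L) by ring, Real.sqrt_mul hτ.le]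
  have hb : Real.sqrt (2 * r * L) = sr * u := by
    rw [hsrdef, hudef, show 2 * r * L = r * (2 * L) by ring, Real.sqrt_mul h0r.le]
  rw [ha]
  set b := sr * u with hbdef
  set c := (s:ℝ) * (st * u) with hc
  set P := Measure.pi fun i : Fin s => gaussianReal (μ i) 1 with hP
  have hSm : MeasurableSet {z : Fin s → ℝ | ∑ i, |z i| ≤ c} :=
    measurableSet_le (Finset.measurable_sum _ fun i _ => (measurable_pi_apply i).abs)
      measurable_const
  have hfmeas : ∀ i : Fin s, Measurable fun x : ℝ => ENNReal.ofReal (Real.exp (-(t * |x|))) := by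
    intro i; fun_prop
  have step1 : P {z | ∑ i, |z i| ≤ c}
      ≤ ∫⁻ z, ENNReal.ofReal (Real.exp (t * c))
          * ∏ i, ENNReal.ofReal (Real.exp (-(t * |z i|))) ∂P := by
    rw [← lintegral_indicator_one hSm]
    refine lintegral_mono fun z => ?_
    by_cases hz : z ∈ {z : Fin s → ℝ | ∑ i, |z i| ≤ c}
    · rw [Set.indicator_of_mem hz]
      rw [← ENNReal.ofReal_prod_of_nonneg (fun i _ => Real.exp_nonneg _),
        ← ENNReal.ofReal_mul (Real.exp_nonneg _), ← Real.exp_sum, ← Real.exp_add]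
      refine ENNReal.one_le_ofReal.2 (Real.one_le_exp ?_)
      have hsum : ∑ i, -(t * |z i|) = -(t * ∑ i, |z i|) := by
        rw [Finset.mul_sum, ← Finset.sum_neg_distrib]
      have hzz : (∑ i, |z i|) ≤ c := hz
      have := mul_le_mul_of_nonneg_left hzz ht0
      rw [hsum]; linarith
    · rw [Set.indicator_of_notMem hz]; exact zero_le
  have step2 : ∫⁻ z, ENNReal.ofReal (Real.exp (t * c))
        * ∏ i, ENNReal.ofReal (Real.exp (-(t * |z i|))) ∂P
      = ENNReal.ofReal (Real.exp (t * c))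
        * ∏ i, ∫⁻ x, ENNReal.ofReal (Real.exp (-(t * |x|))) ∂gaussianReal (μ i) 1 := by
    rw [lintegral_const_mul _ (Finset.measurable_prod Finset.univ
      (fun i _ => (hfmeas i).comp (measurable_pi_apply i)) :
        Measurable fun z : Fin s → ℝ => ∏ i, ENNReal.ofReal (Real.exp (-(t * |z i|)))), hP,
      lintegral_pi_prod_aux s (fun i => gaussianReal (μ i) 1) (fun i => inferInstance)
        (fun i x => ENNReal.ofReal (Real.exp (-(t * |x|)))) hfmeas]
  have hfac : ∀ i : Fin s, ∫⁻ x, ENNReal.ofReal (Real.exp (-(t * |x|))) ∂gaussianReal (μ i) 1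
      ≤ ENNReal.ofReal (2 * Real.exp (t ^ 2 / 2 - t * b)) := by
    intro i
    refine (gauss_lap_bound (μ i) t ht0).trans (ENNReal.ofReal_le_ofReal ?_)
    have h1 : b ≤ |μ i| := by rw [← hb]; exact (hμ i).le
    have h2 := mul_le_mul_of_nonneg_left h1 ht0
    have h3 := Real.exp_le_exp.2 (show t ^ 2 / 2 - t * |μ i| ≤ t ^ 2 / 2 - t * b by linarith)
    linarith
  have hexp : t * (st * u) + t ^ 2 / 2 - t * b = -((sr - st) ^ 2 * L) := by
    rw [htdef, hbdef]
    linear_combination ((sr - st) * st + (sr - st) ^ 2 / 2 - (sr - st) * sr) * hu2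
  have hreal : Real.exp (t * c) * (2 * Real.exp (t ^ 2 / 2 - t * b)) ^ s
      = 2 ^ s * Real.exp (-((sr - st) ^ 2 * s * L)) := by
    have he : t * c + s * (t ^ 2 / 2 - t * b) = -((sr - st) ^ 2 * s * L) := by
      rw [hc]; linear_combination (s : ℝ) * hexp
    rw [mul_pow, ← Real.exp_nat_mul, ← he, Real.exp_add]
    ring
  calc P {z | ∑ i, |z i| ≤ c}
      ≤ ENNReal.ofReal (Real.exp (t * c))
        * ∏ i, ∫⁻ x, ENNReal.ofReal (Real.exp (-(t * |x|))) ∂gaussianReal (μ i) 1 :=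
        step1.trans step2.le
    _ ≤ ENNReal.ofReal (Real.exp (t * c))
        * ∏ _i : Fin s, ENNReal.ofReal (2 * Real.exp (t ^ 2 / 2 - t * b)) :=
        mul_le_mul_right (Finset.prod_le_prod' fun i _ => hfac i) _
    _ = ENNReal.ofReal (Real.exp (t * c) * (2 * Real.exp (t ^ 2 / 2 - t * b)) ^ s) := by
        rw [Finset.prod_const, Finset.card_univ, Fintype.card_fin,
          ← ENNReal.ofReal_pow (by positivity), ← ENNReal.ofReal_mul (Real.exp_nonneg _)]
    _ ≤ ENNReal.ofReal ((2:ℝ) ^ s * Real.exp (-((sr - st) ^ 2 * s * L))) := by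
        rw [hreal]
end

section
/- Let X ~ χ²_k(ν) be a noncentral chi-square random variable with k degrees of freedom and noncentrality ν ≥ 0. Then for all x > 0, P[X > (k+ν) + 2√((k+2ν)x) + 2x] ≤ exp(−x) and P[X < (k+ν) − 2√((k+2ν)x)] ≤ exp(−x). -/
open MeasureTheory ProbabilityTheory Real
open scoped ENNReal NNReal

section Aux

lemma birge_cexp_quad_eq (b c d x : ℝ) :
    Complex.exp ((b:ℂ) * x ^ 2 + c * x + d) = ((Real.exp (b * x ^ 2 + c * x + d) : ℝ) : ℂ) := by
  rw [show ((b:ℂ) * x ^ 2 + c * x + d) = ((b * x ^ 2 + c * x + d : ℝ) : ℂ) by push_cast; ring,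
    Complex.ofReal_exp]

lemma birge_real_integrable_exp_quadratic {b : ℝ} (hb : b < 0) (c d : ℝ) :
    Integrable (fun z : ℝ => Real.exp (b * z ^ 2 + c * z + d)) := by
  have h := (integrable_cexp_quadratic' (b := (b : ℂ)) (by simpa using hb) c d).re
  refine h.congr (Filter.Eventually.of_forall fun x => ?_)
  simp only [birge_cexp_quad_eq, RCLike.re_to_complex, Complex.ofReal_re]

lemma birge_real_integral_exp_quadratic {b : ℝ} (hb : b < 0) (c d : ℝ) :
    ∫ z : ℝ, Real.exp (b * z ^ 2 + c * z + d)
      = Real.sqrt (π / -b) * Real.exp (d - c ^ 2 / (4 * b)) := by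
  have h := integral_cexp_quadratic (b := (b : ℂ)) (by simpa using hb) c d
  have h1 : ∫ x : ℝ, Complex.exp ((b:ℂ) * x ^ 2 + c * x + d)
      = ((∫ z : ℝ, Real.exp (b * z ^ 2 + c * z + d) : ℝ) : ℂ) := by
    simp only [birge_cexp_quad_eq]
    exact integral_ofReal
  have h2 : ((π : ℂ) / -(b:ℂ)) ^ (1 / 2 : ℂ) * Complex.exp ((d:ℂ) - (c:ℂ) ^ 2 / (4 * b))
      = ((Real.sqrt (π / -b) * Real.exp (d - c ^ 2 / (4 * b)) : ℝ) : ℂ) := by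
    have hpos : (0:ℝ) ≤ π / -b := div_nonneg pi_pos.le (by linarith)
    rw [Real.sqrt_eq_rpow, Complex.ofReal_mul, Complex.ofReal_exp,
      Complex.ofReal_cpow hpos]
    push_cast
    ring_nf
  rw [h1, h2] at h
  exact_mod_cast h

lemma birge_gaussian_mgf_sq (a t : ℝ) (ht : t < 1/2) :
    ∫⁻ z, ENNReal.ofReal (Real.exp (t * (z + a) ^ 2)) ∂(gaussianReal 0 1)
      = ENNReal.ofReal (Real.exp (t * a ^ 2 / (1 - 2 * t)) / Real.sqrt (1 - 2 * t)) := by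
  have h12 : (0:ℝ) < 1 - 2 * t := by linarith
  have hb : t - 1/2 < 0 := by linarith
  have hfm : Measurable fun z : ℝ => ENNReal.ofReal (Real.exp (t * (z + a) ^ 2)) := by
    measurability
  rw [gaussianReal_of_var_ne_zero 0 one_ne_zero,
    lintegral_withDensity_eq_lintegral_mul _ (measurable_gaussianPDF 0 1) hfm]
  have key : ∀ z : ℝ, (gaussianPDF 0 1 * fun z => ENNReal.ofReal (Real.exp (t * (z + a) ^ 2))) z
      = ENNReal.ofReal ((Real.sqrt (2 * π))⁻¹ *
          Real.exp ((t - 1/2) * z ^ 2 + (2 * t * a) * z + t * a ^ 2)) := by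
    intro z
    simp only [Pi.mul_apply, gaussianPDF, gaussianPDFReal, NNReal.coe_one, mul_one, sub_zero]
    rw [← ENNReal.ofReal_mul (by positivity)]
    congr 1
    rw [mul_assoc, ← Real.exp_add]
    congr 1
    ring
  simp_rw [key]
  have hInt : Integrable (fun z : ℝ => (Real.sqrt (2 * π))⁻¹ *
      Real.exp ((t - 1/2) * z ^ 2 + (2 * t * a) * z + t * a ^ 2)) :=
    (birge_real_integrable_exp_quadratic hb _ _).const_mul _
  rw [← ofReal_integral_eq_lintegral_ofReal hInt
      (Filter.Eventually.of_forall fun z => by positivity)]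
  congr 1
  rw [MeasureTheory.integral_const_mul, birge_real_integral_exp_quadratic hb]
  have e1 : π / -(t - 1/2) = 2 * π / (1 - 2 * t) := by
    rw [div_eq_div_iff (by linarith : -(t-1/2) ≠ 0) h12.ne']; ring
  have hb' : t - 1/2 ≠ 0 := by linarith
  have e2 : t * a ^ 2 - (2 * t * a) ^ 2 / (4 * (t - 1/2)) = t * a ^ 2 / (1 - 2 * t) := by
    have h4 : (4:ℝ) * (t - 1/2) ≠ 0 := by intro h; apply hb'; linarith
    rw [sub_div' h4, div_eq_div_iff h4 h12.ne']
    ring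
  rw [e1, e2, Real.sqrt_div (by positivity : (0:ℝ) ≤ 2 * π)]
  have hs : Real.sqrt (2 * π) ≠ 0 := by positivity
  field_simp

lemma birge_lintegral_pi_prod : ∀ (n : ℕ) (f : Fin n → ℝ → ℝ≥0∞), (∀ i, Measurable (f i)) →
    ∫⁻ x : Fin n → ℝ, ∏ i, f i (x i) ∂(Measure.pi fun _ => gaussianReal 0 1)
      = ∏ i, ∫⁻ y, f i y ∂(gaussianReal 0 1) := by
  intro n
  induction n with
  | zero => intro f _; simp
  | succ n ih =>
    intro f hf
    have hmp := MeasureTheory.measurePreserving_piFinSuccAbove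
      (fun _ : Fin (n+1) => gaussianReal 0 1) 0
    set G : ℝ × (Fin n → ℝ) → ℝ≥0∞ := fun p => f 0 p.1 * ∏ j, f j.succ (p.2 j) with hG
    have hGm : Measurable G := by
      apply Measurable.mul ((hf 0).comp measurable_fst)
      exact Finset.measurable_prod _ fun j _ =>
        (hf j.succ).comp ((measurable_pi_apply j).comp measurable_snd)
    have h1 : ∀ x : Fin (n+1) → ℝ,
        (∏ i, f i (x i)) = G ((MeasurableEquiv.piFinSuccAbove (fun _ => ℝ) 0) x) := by
      intro x
      rw [Fin.prod_univ_succ]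
      simp [G, MeasurableEquiv.piFinSuccAbove, Fin.zero_succAbove, Fin.tail]
    calc ∫⁻ x : Fin (n+1) → ℝ, ∏ i, f i (x i) ∂(Measure.pi fun _ => gaussianReal 0 1)
        = ∫⁻ x, G ((MeasurableEquiv.piFinSuccAbove (fun _ => ℝ) 0) x)
            ∂(Measure.pi fun _ => gaussianReal 0 1) := by simp_rw [h1]
      _ = ∫⁻ p, G p ∂((gaussianReal 0 1).prod (Measure.pi fun _ : Fin n => gaussianReal 0 1)) :=
            hmp.lintegral_comp hGm
      _ = (∫⁻ y, f 0 y ∂(gaussianReal 0 1)) *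
            ∫⁻ x : Fin n → ℝ, ∏ j, f j.succ (x j) ∂(Measure.pi fun _ => gaussianReal 0 1) :=
            lintegral_prod_mul (hf 0).aemeasurable
              (Finset.measurable_prod _ fun (j : Fin n) _ =>
                (hf j.succ).comp (measurable_pi_apply j)).aemeasurable
      _ = ∏ i, ∫⁻ y, f i y ∂(gaussianReal 0 1) := by
            rw [ih _ fun j => hf j.succ, Fin.prod_univ_succ]

lemma birge_mgf_sum (k : ℕ) (a : Fin k → ℝ) (t : ℝ) (ht : t < 1/2) :
    ∫⁻ z : Fin k → ℝ, ENNReal.ofReal (Real.exp (t * ∑ i, (z i + a i) ^ 2))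
        ∂(Measure.pi fun _ => gaussianReal 0 1)
      = ENNReal.ofReal
          (Real.exp (t * (∑ i, (a i) ^ 2) / (1 - 2 * t)) / Real.sqrt (1 - 2 * t) ^ k) := by
  have h12 : (0:ℝ) < 1 - 2 * t := by linarith
  have heq : ∀ z : Fin k → ℝ, ENNReal.ofReal (Real.exp (t * ∑ i, (z i + a i) ^ 2))
      = ∏ i, ENNReal.ofReal (Real.exp (t * (z i + a i) ^ 2)) := by
    intro z
    rw [Finset.mul_sum, Real.exp_sum, ← ENNReal.ofReal_prod_of_nonneg]
    intro i _
    exact Real.exp_nonneg _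
  simp_rw [heq]
  rw [birge_lintegral_pi_prod k (fun i z => ENNReal.ofReal (Real.exp (t * (z + a i) ^ 2)))
    (fun i => by measurability)]
  simp_rw [fun i : Fin k => birge_gaussian_mgf_sq (a i) t ht]
  rw [← ENNReal.ofReal_prod_of_nonneg (fun i _ => by positivity)]
  congr 1
  rw [Finset.prod_div_distrib, Finset.prod_const, ← Real.exp_sum]
  congr 2
  rw [← Finset.sum_div, ← Finset.mul_sum]
  simp [Finset.card_univ]

lemma birge_chernoff {α : Type*} [MeasurableSpace α] (μ : Measure α) (X : α → ℝ)
    (hX : Measurable X) (c t M : ℝ) (ht : 0 < t)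
    (hM : ∫⁻ z, ENNReal.ofReal (Real.exp (t * X z)) ∂μ = ENNReal.ofReal M) :
    μ {z | c < X z} ≤ ENNReal.ofReal (Real.exp (-(t * c)) * M) := by
  have hS : MeasurableSet {z | c < X z} := measurableSet_lt measurable_const hX
  have step1 : μ {z | c < X z} ≤ ∫⁻ z, ENNReal.ofReal (Real.exp (t * (X z - c))) ∂μ := by
    rw [← lintegral_indicator_one hS]
    apply lintegral_mono
    intro z
    by_cases hz : z ∈ {z | c < X z}
    · rw [Set.indicator_of_mem hz]
      simp only [Pi.one_apply]
      rw [show (1:ℝ≥0∞) = ENNReal.ofReal 1 by simp]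
      have hcz : c < X z := hz
      exact ENNReal.ofReal_le_ofReal (Real.one_le_exp (by nlinarith))
    · rw [Set.indicator_of_notMem hz]; exact zero_le
  have step2 : ∀ z, ENNReal.ofReal (Real.exp (t * (X z - c)))
      = ENNReal.ofReal (Real.exp (-(t * c))) * ENNReal.ofReal (Real.exp (t * X z)) := by
    intro z
    rw [← ENNReal.ofReal_mul (Real.exp_nonneg _), ← Real.exp_add]
    ring_nf
  calc μ {z | c < X z} ≤ ∫⁻ z, ENNReal.ofReal (Real.exp (t * (X z - c))) ∂μ := step1
    _ = ENNReal.ofReal (Real.exp (-(t * c))) * ∫⁻ z, ENNReal.ofReal (Real.exp (t * X z)) ∂μ := by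
        simp_rw [step2]; exact lintegral_const_mul' _ _ ENNReal.ofReal_ne_top
    _ = ENNReal.ofReal (Real.exp (-(t * c)) * M) := by
        rw [hM, ← ENNReal.ofReal_mul (Real.exp_nonneg _)]

lemma birge_log_quadratic_le (u : ℝ) (hu : 0 ≤ u) : u - u ^ 2 / 2 ≤ Real.log (1 + u) := by
  set f := fun w : ℝ => Real.log (1 + w) - (w - w ^ 2 / 2) with hf
  have hderiv : ∀ w : ℝ, 0 < w → HasDerivAt f ((1 + w)⁻¹ - (1 - w)) w := by
    intro w hw
    have h1 : HasDerivAt (fun v : ℝ => 1 + v) 1 w := by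
      simpa using (hasDerivAt_id w).const_add 1
    have h2 : HasDerivAt (fun v : ℝ => Real.log (1 + v)) ((1 + w)⁻¹ * 1) w :=
      (Real.hasDerivAt_log (by linarith)).comp w h1
    have h3 : HasDerivAt (fun v : ℝ => v - v ^ 2 / 2) (1 - w) w := by
      have := ((hasDerivAt_pow 2 w).div_const 2)
      have h4 := (hasDerivAt_id w).sub this
      have h5 : HasDerivAt (id - fun x : ℝ => x ^ 2 / 2) (1 - w) w := by simpa using h4
      exact h5
    have h6 : HasDerivAt ((fun v : ℝ => Real.log (1 + v)) - fun v : ℝ => v - v ^ 2 / 2)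
        ((1 + w)⁻¹ - (1 - w)) w := by simpa using h2.sub h3
    exact h6
  have hmono : MonotoneOn f (Set.Ici 0) := by
    apply monotoneOn_of_deriv_nonneg (convex_Ici 0)
    · apply ContinuousOn.sub
      · apply ContinuousOn.log (by fun_prop)
        intro w hw
        have : (0:ℝ) ≤ w := hw
        positivity
      · fun_prop
    · intro w hw
      rw [interior_Ici] at hw
      exact (hderiv w hw).differentiableAt.differentiableWithinAt
    · intro w hw
      rw [interior_Ici] at hw
      have hw' : 0 < w := hw
      have h1w : (0:ℝ) < 1 + w := by linarith
      rw [(hderiv w hw').deriv]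
      have : (1 + w)⁻¹ - (1 - w) = w ^ 2 / (1 + w) := by
        rw [eq_div_iff h1w.ne', sub_mul, inv_mul_cancel₀ h1w.ne']
        ring
      rw [this]
      positivity
  have h0 : f 0 ≤ f u := hmono Set.self_mem_Ici hu hu
  simp only [hf, Real.log_one, add_zero] at h0 ⊢
  norm_num at h0
  linarith

lemma birge_exp_le_one_add (u : ℝ) (hu : 0 ≤ u) : Real.exp (u - u ^ 2 / 2) ≤ 1 + u := by
  rw [← Real.exp_log (show (0:ℝ) < 1 + u by linarith), Real.exp_le_exp]
  exact birge_log_quadratic_le u hu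

lemma birge_upper_final (k : ℕ) (ν p q x : ℝ) (hν0 : 0 ≤ ν) (hp0 : 0 < p) (hq0 : 0 < q)
    (hp : p ^ 2 = x) (hq : q ^ 2 = (k:ℝ) + 2 * ν) :
    Real.exp (-(p / (q + 2 * p) * ((k:ℝ) + ν + 2 * (q * p) + 2 * x))) *
      (Real.exp (p / (q + 2 * p) * ν / (1 - 2 * (p / (q + 2 * p)))) /
        Real.sqrt (1 - 2 * (p / (q + 2 * p))) ^ k)
      ≤ Real.exp (-x) := by
  have hqp : 0 < q + 2 * p := by linarith
  set t := p / (q + 2 * p) with htdef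
  have ht0 : 0 < t := div_pos hp0 hqp
  have h12 : 1 - 2 * t = q / (q + 2 * p) := by
    rw [htdef, eq_div_iff hqp.ne']
    field_simp
    ring
  have h12pos : 0 < 1 - 2 * t := by rw [h12]; positivity
  have hY : t + t ^ 2 / (1 - 2 * t) = p * (q + p) / (q * (q + 2 * p)) := by
    rw [h12, htdef]
    field_simp
  have hcoord : Real.exp (-(t + t ^ 2 / (1 - 2 * t))) ≤ Real.sqrt (1 - 2 * t) := by
    apply Real.le_sqrt_of_sq_le
    rw [← Real.exp_nat_mul]
    push_cast
    rw [show (2:ℝ) * -(t + t ^ 2 / (1 - 2 * t)) = -(2 * (t + t ^ 2 / (1 - 2 * t))) by ring,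
      Real.exp_neg, inv_le_comm₀ (Real.exp_pos _) h12pos]
    rw [hY, h12, inv_div]
    set Z := 2 * (p * (q + p) / (q * (q + 2 * p))) with hZ
    have hZ0 : 0 ≤ Z := by rw [hZ]; positivity
    calc (q + 2 * p) / q ≤ 1 + Z + Z ^ 2 / 2 := by
          have h2 : 1 + Z + Z ^ 2 / 2 = (q ^ 2 * (q + 2 * p) ^ 2 + 2 * p * (q + p) * q * (q + 2 * p)
              + 2 * p ^ 2 * (q + p) ^ 2) / (q ^ 2 * (q + 2 * p) ^ 2) := by
            rw [hZ]
            field_simp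
          rw [h2, div_le_div_iff₀ hq0 (by positivity)]
          nlinarith [mul_pos hp0 hq0, mul_pos (mul_pos hp0 hp0) hp0, sq_nonneg (p - q),
            mul_pos (mul_pos hp0 hp0) hq0, mul_pos (mul_pos hq0 hq0) hp0]
      _ ≤ Real.exp Z := by
          have := Real.quadratic_le_exp_of_nonneg hZ0
          linarith
  have hpowle : Real.exp (-(t + t ^ 2 / (1 - 2 * t))) ^ k ≤ Real.sqrt (1 - 2 * t) ^ k :=
    pow_le_pow_left₀ (Real.exp_nonneg _) hcoord k
  have hMle : Real.exp (t * ν / (1 - 2 * t)) / Real.sqrt (1 - 2 * t) ^ k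
      ≤ Real.exp (t * ν / (1 - 2 * t)) / Real.exp (-(t + t ^ 2 / (1 - 2 * t))) ^ k :=
    div_le_div_of_nonneg_left (Real.exp_nonneg _) (pow_pos (Real.exp_pos _) k) hpowle
  calc Real.exp (-(t * ((k:ℝ) + ν + 2 * (q * p) + 2 * x))) *
        (Real.exp (t * ν / (1 - 2 * t)) / Real.sqrt (1 - 2 * t) ^ k)
      ≤ Real.exp (-(t * ((k:ℝ) + ν + 2 * (q * p) + 2 * x))) *
        (Real.exp (t * ν / (1 - 2 * t)) / Real.exp (-(t + t ^ 2 / (1 - 2 * t))) ^ k) :=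
        mul_le_mul_of_nonneg_left hMle (Real.exp_nonneg _)
    _ = Real.exp (-(t * ((k:ℝ) + ν + 2 * (q * p) + 2 * x))
          + (t * ν / (1 - 2 * t) - (k:ℝ) * -(t + t ^ 2 / (1 - 2 * t)))) := by
        rw [← Real.exp_nat_mul, ← Real.exp_sub, ← Real.exp_add]
    _ ≤ Real.exp (-x) := by
        apply Real.exp_le_exp.mpr
        have hk' : (k:ℝ) = q ^ 2 - 2 * ν := by linarith
        rw [hY, h12, htdef, hk', ← hp]
        apply le_of_eq
        field_simp
        ring

lemma birge_lower_final (k : ℕ) (ν p q x : ℝ) (hν0 : 0 ≤ ν) (hp0 : 0 < p) (hq0 : 0 < q)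
    (hp : p ^ 2 = x) (hq : q ^ 2 = (k:ℝ) + 2 * ν) :
    Real.exp (-(p / q * -((k:ℝ) + ν - 2 * (q * p)))) *
      (Real.exp (-(p / q) * ν / (1 - 2 * -(p / q))) /
        Real.sqrt (1 - 2 * -(p / q)) ^ k)
      ≤ Real.exp (-x) := by
  set u := p / q with hu
  have hu0 : 0 < u := div_pos hp0 hq0
  have h12 : 1 - 2 * -u = (q + 2 * p) / q := by
    rw [hu, eq_div_iff hq0.ne']
    field_simp
    ring
  have h12pos : 0 < 1 - 2 * -u := by rw [h12]; positivity
  have hcoord : Real.exp (u - u ^ 2) ≤ Real.sqrt (1 - 2 * -u) := by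
    apply Real.le_sqrt_of_sq_le
    rw [← Real.exp_nat_mul]
    push_cast
    rw [show (2:ℝ) * (u - u ^ 2) = 2 * u - (2 * u) ^ 2 / 2 by ring]
    have := birge_exp_le_one_add (2 * u) (by positivity)
    linarith
  have hpowle : Real.exp (u - u ^ 2) ^ k ≤ Real.sqrt (1 - 2 * -u) ^ k :=
    pow_le_pow_left₀ (Real.exp_nonneg _) hcoord k
  have hMle : Real.exp (-u * ν / (1 - 2 * -u)) / Real.sqrt (1 - 2 * -u) ^ k
      ≤ Real.exp (-u * ν / (1 - 2 * -u)) / Real.exp (u - u ^ 2) ^ k :=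
    div_le_div_of_nonneg_left (Real.exp_nonneg _) (pow_pos (Real.exp_pos _) k) hpowle
  calc Real.exp (-(u * -((k:ℝ) + ν - 2 * (q * p)))) *
        (Real.exp (-u * ν / (1 - 2 * -u)) / Real.sqrt (1 - 2 * -u) ^ k)
      ≤ Real.exp (-(u * -((k:ℝ) + ν - 2 * (q * p)))) *
        (Real.exp (-u * ν / (1 - 2 * -u)) / Real.exp (u - u ^ 2) ^ k) :=
        mul_le_mul_of_nonneg_left hMle (Real.exp_nonneg _)
    _ = Real.exp (-(u * -((k:ℝ) + ν - 2 * (q * p)))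
          + (-u * ν / (1 - 2 * -u) - (k:ℝ) * (u - u ^ 2))) := by
        rw [← Real.exp_nat_mul, ← Real.exp_sub, ← Real.exp_add]
    _ ≤ Real.exp (-x) := by
        apply Real.exp_le_exp.mpr
        have hk' : (k:ℝ) = q ^ 2 - 2 * ν := by linarith
        have hqp : 0 < q + 2 * p := by linarith
        have hGeq : -(u * -((k:ℝ) + ν - 2 * (q * p)))
            + (-u * ν / (1 - 2 * -u) - (k:ℝ) * (u - u ^ 2))
            = (-(p ^ 2) * (q ^ 2 * (q + 2 * p)) - 4 * ν * p ^ 3) / (q ^ 2 * (q + 2 * p)) := by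
          rw [h12, hu, hk']
          field_simp
          ring
        rw [hGeq, div_le_iff₀ (by positivity), ← hp]
        nlinarith [mul_nonneg hν0 (pow_pos hp0 3).le]

end Aux

/-- Birgé's tail bounds for a noncentral chi-square random variable
`X ~ χ²_k(ν)` realized as `∑ (Zᵢ + aᵢ)²` with `Zᵢ` i.i.d. `N(0,1)` and
`ν = ∑ aᵢ²`: for all `x > 0`,
`P[X > (k+ν) + 2√((k+2ν)x) + 2x] ≤ e^{−x}` and
`P[X < (k+ν) − 2√((k+2ν)x)] ≤ e^{−x}`. -/
theorem noncentral_chi_square_tail_bounds (k : ℕ) (a : Fin k → ℝ) (x : ℝ) (hx : 0 < x) :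
    (Measure.pi fun _ : Fin k => gaussianReal 0 1)
        {z | ((k : ℝ) + ∑ i, (a i) ^ 2) +
              2 * Real.sqrt (((k : ℝ) + 2 * ∑ i, (a i) ^ 2) * x) + 2 * x <
            ∑ i, (z i + a i) ^ 2} ≤
      ENNReal.ofReal (Real.exp (-x)) ∧
    (Measure.pi fun _ : Fin k => gaussianReal 0 1)
        {z | ∑ i, (z i + a i) ^ 2 <
            ((k : ℝ) + ∑ i, (a i) ^ 2) -
              2 * Real.sqrt (((k : ℝ) + 2 * ∑ i, (a i) ^ 2) * x)} ≤
      ENNReal.ofReal (Real.exp (-x)) := by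
  have hν0 : 0 ≤ ∑ i, (a i) ^ 2 := Finset.sum_nonneg fun i _ => sq_nonneg _
  have hXm : Measurable fun z : Fin k → ℝ => ∑ i, (z i + a i) ^ 2 :=
    Finset.measurable_sum _ fun i _ => ((measurable_pi_apply i).add_const _).pow_const 2
  by_cases hk : k = 0
  · subst hk
    constructor
    · have hset : {z : Fin 0 → ℝ | (((0:ℕ) : ℝ) + ∑ i, (a i) ^ 2) +
          2 * Real.sqrt ((((0:ℕ) : ℝ) + 2 * ∑ i, (a i) ^ 2) * x) + 2 * x <
          ∑ i, (z i + a i) ^ 2} = ∅ := by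
        ext z
        simp
        linarith
      rw [hset]
      simp
    · have hset : {z : Fin 0 → ℝ | ∑ i, (z i + a i) ^ 2 <
          (((0:ℕ) : ℝ) + ∑ i, (a i) ^ 2) -
          2 * Real.sqrt ((((0:ℕ) : ℝ) + 2 * ∑ i, (a i) ^ 2) * x)} = ∅ := by
        ext z
        simp
      rw [hset]
      simp
  · have hk1 : (1:ℝ) ≤ (k:ℝ) := by exact_mod_cast Nat.one_le_iff_ne_zero.mpr hk
    have hD0 : (0:ℝ) < (k:ℝ) + 2 * ∑ i, (a i) ^ 2 := by linarith
    have hp0 : 0 < Real.sqrt x := Real.sqrt_pos.mpr hx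
    have hq0 : 0 < Real.sqrt ((k:ℝ) + 2 * ∑ i, (a i) ^ 2) := Real.sqrt_pos.mpr hD0
    have hp : (Real.sqrt x) ^ 2 = x := Real.sq_sqrt hx.le
    have hq : (Real.sqrt ((k:ℝ) + 2 * ∑ i, (a i) ^ 2)) ^ 2 = (k:ℝ) + 2 * ∑ i, (a i) ^ 2 :=
      Real.sq_sqrt hD0.le
    have hsq : Real.sqrt (((k:ℝ) + 2 * ∑ i, (a i) ^ 2) * x)
        = Real.sqrt ((k:ℝ) + 2 * ∑ i, (a i) ^ 2) * Real.sqrt x := Real.sqrt_mul hD0.le x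
    set p := Real.sqrt x with hpdef
    set q := Real.sqrt ((k:ℝ) + 2 * ∑ i, (a i) ^ 2) with hqdef
    rw [hsq]
    constructor
    · -- upper tail
      have hqp : 0 < q + 2 * p := by linarith
      have ht0 : 0 < p / (q + 2 * p) := div_pos hp0 hqp
      have ht : p / (q + 2 * p) < 1/2 := by
        rw [div_lt_iff₀ hqp]
        linarith
      have hmgf := birge_mgf_sum k a (p / (q + 2 * p)) ht
      have hC := birge_chernoff (Measure.pi fun _ : Fin k => gaussianReal 0 1)
        (fun z => ∑ i, (z i + a i) ^ 2) hXm
        (((k:ℝ) + ∑ i, (a i) ^ 2) + 2 * (q * p) + 2 * x) (p / (q + 2 * p)) _ ht0 hmgf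
      refine le_trans hC (ENNReal.ofReal_le_ofReal ?_)
      exact birge_upper_final k _ p q x hν0 hp0 hq0 hp hq
    · -- lower tail
      have ht0 : 0 < p / q := div_pos hp0 hq0
      have hsetEq : {z : Fin k → ℝ | ∑ i, (z i + a i) ^ 2 <
            ((k:ℝ) + ∑ i, (a i) ^ 2) - 2 * (q * p)}
          = {z : Fin k → ℝ | -(((k:ℝ) + ∑ i, (a i) ^ 2) - 2 * (q * p)) <
              (fun z : Fin k → ℝ => -∑ i, (z i + a i) ^ 2) z} := by
        ext z
        simp only [Set.mem_setOf_eq, neg_lt_neg_iff]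
      rw [hsetEq]
      have hmgf' : ∫⁻ z : Fin k → ℝ, ENNReal.ofReal
            (Real.exp ((p / q) * ((fun z : Fin k → ℝ => -∑ i, (z i + a i) ^ 2) z)))
            ∂(Measure.pi fun _ => gaussianReal 0 1)
          = ENNReal.ofReal (Real.exp ((-(p / q)) * (∑ i, (a i) ^ 2) / (1 - 2 * (-(p / q)))) /
              Real.sqrt (1 - 2 * (-(p / q))) ^ k) := by
        simp_rw [show ∀ z : Fin k → ℝ, (p / q) * (-∑ i, (z i + a i) ^ 2)
            = (-(p / q)) * ∑ i, (z i + a i) ^ 2 from fun z => by ring]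
        exact birge_mgf_sum k a (-(p / q)) (by nlinarith)
      have hC := birge_chernoff (Measure.pi fun _ : Fin k => gaussianReal 0 1)
        (fun z : Fin k → ℝ => -∑ i, (z i + a i) ^ 2) hXm.neg
        (-(((k:ℝ) + ∑ i, (a i) ^ 2) - 2 * (q * p))) (p / q) _ ht0 hmgf'
      refine le_trans hC (ENNReal.ofReal_le_ofReal ?_)
      have := birge_lower_final k (∑ i, (a i) ^ 2) p q x hν0 hp0 hq0 hp hq
      convert this using 4 <;> ring
end

section
/- Let β, β' be drawn independently from the symmetric prior π that selects a uniformly random subset S ⊂ [p] of size s and sets β_j = ±A with equal probability independently on S, and 0 otherwise. Then for any θ ∈ ℝ, E[exp(θ·n·⟨β,β'⟩)] ≤ exp((s²/p)·(cosh(θnA²) − 1)). -/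
open Finset

/-- The sign `±1` attached to a Rademacher coin. -/
def radSign (b : Bool) : ℝ := if b then 1 else -1

lemma sum_bool_pair (c : ℝ) :
    ∑ bb : Bool × Bool, Real.exp (c * (radSign bb.1 * radSign bb.2))
      = 4 * Real.cosh c := by
  rw [Fintype.sum_prod_type]
  simp [radSign, Real.cosh_eq]
  ring

lemma inner_double_sum {p : ℕ} (c : ℝ) (T : Finset (Fin p)) :
    ∑ σ : Fin p → Bool, ∑ σ' : Fin p → Bool,
      Real.exp (c * ∑ j ∈ T, radSign (σ j) * radSign (σ' j))
      = (2 ^ p * 2 ^ p) * (Real.cosh c) ^ T.card := by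
  classical
  set g : Fin p → Bool × Bool → ℝ := fun j bb =>
    if j ∈ T then Real.exp (c * (radSign bb.1 * radSign bb.2)) else 1 with hg
  have h1 : ∀ σ σ' : Fin p → Bool,
      Real.exp (c * ∑ j ∈ T, radSign (σ j) * radSign (σ' j))
        = ∏ j, g j (σ j, σ' j) := by
    intro σ σ'
    rw [Finset.mul_sum, Real.exp_sum]
    rw [show (∏ j, g j (σ j, σ' j))
        = ∏ j ∈ Finset.univ ∩ T, Real.exp (c * (radSign (σ j) * radSign (σ' j))) from
      Finset.prod_ite_mem _ _ _]
    rw [Finset.univ_inter]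
  have h2 : (∑ σ : Fin p → Bool, ∑ σ' : Fin p → Bool,
      Real.exp (c * ∑ j ∈ T, radSign (σ j) * radSign (σ' j)))
      = ∏ j, ∑ bb : Bool × Bool, g j bb := by
    simp_rw [h1]
    calc ∑ σ : Fin p → Bool, ∑ σ' : Fin p → Bool, ∏ j, g j (σ j, σ' j)
        = ∑ σ : Fin p → Bool, ∏ j, ∑ b' : Bool, g j (σ j, b') :=
          Finset.sum_congr rfl fun σ _ =>
            (Fintype.prod_sum fun j b' => g j (σ j, b')).symm
      _ = ∏ j, ∑ b : Bool, ∑ b' : Bool, g j (b, b') :=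
          (Fintype.prod_sum fun j b => ∑ b' : Bool, g j (b, b')).symm
      _ = ∏ j, ∑ bb : Bool × Bool, g j bb :=
          Finset.prod_congr rfl fun j _ => (Fintype.sum_prod_type _).symm
  rw [h2]
  have h3 : ∀ j : Fin p, (∑ bb : Bool × Bool, g j bb)
      = 4 * (if j ∈ T then Real.cosh c else 1) := by
    intro j
    by_cases hj : j ∈ T <;> simp [hg, hj, sum_bool_pair c]
  rw [Finset.prod_congr rfl fun j _ => h3 j, Finset.prod_mul_distrib,
    Finset.prod_const, Finset.prod_ite_mem, Finset.univ_inter, Finset.prod_const]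
  rw [Finset.card_univ, Fintype.card_fin]
  have h4 : (4 : ℝ) ^ p = 2 ^ p * 2 ^ p := by
    rw [← mul_pow]; norm_num
  rw [h4]

lemma card_filter_superset {p s : ℕ} (T : Finset (Fin p)) (hT : T.card ≤ s) :
    ((Finset.powersetCard s (Finset.univ : Finset (Fin p))).filter
        (fun S' => T ⊆ S')).card = (p - T.card).choose (s - T.card) := by
  classical
  have : ((Finset.powersetCard s (Finset.univ : Finset (Fin p))).filter
      (fun S' => T ⊆ S')).card
      = (Finset.powersetCard (s - T.card) ((Finset.univ : Finset (Fin p)) \ T)).card := by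
    apply Finset.card_bij' (fun S' _ => S' \ T) (fun U _ => U ∪ T)
    · intro S' hS'
      simp only [Finset.mem_filter, Finset.mem_powersetCard] at hS'
      obtain ⟨⟨_, hcard⟩, hTS'⟩ := hS'
      rw [Finset.mem_powersetCard]
      constructor
      · exact Finset.sdiff_subset_sdiff (Finset.subset_univ _) le_rfl
      · rw [Finset.card_sdiff_of_subset hTS', hcard]
    · intro U hU
      rw [Finset.mem_powersetCard] at hU
      obtain ⟨hUsub, hUcard⟩ := hU
      have hdisj : Disjoint U T := Finset.disjoint_of_subset_left hUsub
        (Finset.sdiff_disjoint)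
      rw [Finset.mem_filter, Finset.mem_powersetCard]
      refine ⟨⟨Finset.subset_univ _, ?_⟩, Finset.subset_union_right⟩
      rw [Finset.card_union_of_disjoint hdisj, hUcard]
      omega
    · intro S' hS'
      simp only [Finset.mem_filter] at hS'
      exact Finset.sdiff_union_of_subset hS'.2
    · intro U hU
      rw [Finset.mem_powersetCard] at hU
      have hdisj : Disjoint U T := Finset.disjoint_of_subset_left hU.1
        (Finset.sdiff_disjoint)
      rw [Finset.union_sdiff_right, Finset.sdiff_eq_self_of_disjoint hdisj]
  rw [this, Finset.card_powersetCard, Finset.card_sdiff_of_subset (Finset.subset_univ _),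
    Finset.card_univ, Fintype.card_fin]

lemma choose_ratio_bound {p s : ℕ} (hs : s ≤ p) :
    ∀ k, k ≤ s → p ^ k * (p - k).choose (s - k) ≤ s ^ k * p.choose s := by
  intro k
  induction k with
  | zero => simp
  | succ k ih =>
    intro hk1
    have hk : k ≤ s := Nat.le_of_succ_le hk1
    have hkp : k < p := lt_of_lt_of_le hk1 hs
    have hppos : 0 < p - k := by omega
    have key : (p - k) * (p - (k + 1)).choose (s - (k + 1))
        = (s - k) * (p - k).choose (s - k) := by
      have h1 : p - k = (p - (k + 1)) + 1 := by omega
      have h2 : s - k = (s - (k + 1)) + 1 := by omega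
      rw [h1, h2, Nat.add_one_mul_choose_eq, Nat.mul_comm]
    refine Nat.le_of_mul_le_mul_left ?_ hppos
    calc (p - k) * (p ^ (k + 1) * (p - (k + 1)).choose (s - (k + 1)))
        = p * ((s - k) * (p ^ k * (p - k).choose (s - k))) := by
          rw [show (p - k) * (p ^ (k + 1) * (p - (k + 1)).choose (s - (k + 1)))
              = p ^ (k + 1) * ((p - k) * (p - (k + 1)).choose (s - (k + 1))) by ring,
            key, pow_succ]
          ring
      _ ≤ p * ((s - k) * (s ^ k * p.choose s)) :=
          Nat.mul_le_mul le_rfl (Nat.mul_le_mul le_rfl (ih hk))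
      _ = (p * (s - k)) * (s ^ k * p.choose s) := by ring
      _ ≤ (s * (p - k)) * (s ^ k * p.choose s) := by
          refine Nat.mul_le_mul ?_ le_rfl
          obtain ⟨d, hd⟩ := Nat.exists_eq_add_of_le hk
          obtain ⟨e, he⟩ := Nat.exists_eq_add_of_le hs
          have h1 : s - k = d := by omega
          have h2 : p - k = d + e := by omega
          rw [h1, h2, he, hd]
          nlinarith
      _ = (p - k) * (s ^ (k + 1) * p.choose s) := by ring

/-- For `β, β'` i.i.d. from the symmetric prior choosing a uniformly random
size-`s` subset `S ⊆ [p]` and setting `β_j = ±A` with independent fair signs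
on `S` (so `⟨β,β'⟩ = A² ∑_{j ∈ S ∩ S'} ε_j ε'_j`), for every `θ ∈ ℝ`,
`E[exp(θ n ⟨β,β'⟩)] ≤ exp((s²/p)(cosh(θnA²) − 1))`. -/
theorem symmetric_prior_mgf_cosh_bound (p s n : ℕ) (A : ℝ) (hA : 0 < A)
    (hs : s ≤ p) (hp : 0 < p) (θ : ℝ) :
    (∑ S ∈ Finset.powersetCard s (Finset.univ : Finset (Fin p)),
        ∑ S' ∈ Finset.powersetCard s (Finset.univ : Finset (Fin p)),
          ∑ σ : Fin p → Bool, ∑ σ' : Fin p → Bool,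
            Real.exp (θ * (n : ℝ) * A ^ 2 *
              ∑ j ∈ S ∩ S', radSign (σ j) * radSign (σ' j))) /
        (((p.choose s : ℝ)) ^ 2 * 2 ^ p * 2 ^ p) ≤
      Real.exp (((s : ℝ) ^ 2 / (p : ℝ)) * (Real.cosh (θ * (n : ℝ) * A ^ 2) - 1)) := by
  classical
  set c : ℝ := θ * (n : ℝ) * A ^ 2 with hc
  set x : ℝ := Real.cosh c with hxdef
  have hx1 : 1 ≤ x := Real.one_le_cosh c
  set y : ℝ := x - 1 with hydef
  have hy0 : 0 ≤ y := by simp [hydef]; linarith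
  have hxy : x = y + 1 := by ring
  have hppos : (0 : ℝ) < p := by exact_mod_cast hp
  have hchoosepos : (0 : ℝ) < (p.choose s : ℝ) := by
    exact_mod_cast Nat.choose_pos hs
  have h2ppos : (0 : ℝ) < (2 : ℝ) ^ p := by positivity
  -- expand x^|U| over the powerset
  have hx_pow : ∀ U : Finset (Fin p), x ^ U.card = ∑ T ∈ U.powerset, y ^ T.card := by
    intro U
    have h := Finset.prod_add (fun _ : Fin p => y) (fun _ => (1 : ℝ)) U
    simp only [Finset.prod_const, one_pow, mul_one] at h
    rw [hxy, h]
  -- key bound for the inner sum over S'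
  have key1 : ∀ S ∈ Finset.powersetCard s (Finset.univ : Finset (Fin p)),
      (∑ S' ∈ Finset.powersetCard s (Finset.univ : Finset (Fin p)), x ^ (S ∩ S').card)
        ≤ (p.choose s : ℝ) * Real.exp ((s : ℝ) ^ 2 / (p : ℝ) * y) := by
    intro S hS
    have hScard : S.card = s := (Finset.mem_powersetCard.1 hS).2
    have step1 : (∑ S' ∈ Finset.powersetCard s (Finset.univ : Finset (Fin p)),
        x ^ (S ∩ S').card)
        = ∑ T ∈ S.powerset, ((p - T.card).choose (s - T.card) : ℝ) * y ^ T.card := by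
      have hpi : ∀ S' : Finset (Fin p),
          (S ∩ S').powerset = S.powerset.filter (fun T => T ⊆ S') := by
        intro S'
        ext T
        simp only [Finset.mem_powerset, Finset.mem_filter, Finset.subset_inter_iff]
      calc (∑ S' ∈ Finset.powersetCard s (Finset.univ : Finset (Fin p)),
              x ^ (S ∩ S').card)
          = ∑ S' ∈ Finset.powersetCard s (Finset.univ : Finset (Fin p)),
              ∑ T ∈ S.powerset, (if T ⊆ S' then y ^ T.card else 0) := by
            refine Finset.sum_congr rfl fun S' _ => ?_
            rw [hx_pow, hpi S', Finset.sum_filter]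
        _ = ∑ T ∈ S.powerset,
              ∑ S' ∈ Finset.powersetCard s (Finset.univ : Finset (Fin p)),
                (if T ⊆ S' then y ^ T.card else 0) := Finset.sum_comm
        _ = ∑ T ∈ S.powerset, ((p - T.card).choose (s - T.card) : ℝ) * y ^ T.card := by
            refine Finset.sum_congr rfl fun T hT => ?_
            have hTcard : T.card ≤ s := hScard ▸
              Finset.card_le_card (Finset.mem_powerset.1 hT)
            rw [← Finset.sum_filter, Finset.sum_const, nsmul_eq_mul,
              card_filter_superset T hTcard]
    rw [step1]
    have step2 : (∑ T ∈ S.powerset, ((p - T.card).choose (s - T.card) : ℝ) * y ^ T.card)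
        = ∑ m ∈ Finset.range (s + 1),
            (s.choose m : ℝ) * (((p - m).choose (s - m) : ℝ) * y ^ m) := by
      have := Finset.sum_powerset_apply_card
        (fun m => ((p - m).choose (s - m) : ℝ) * y ^ m) (x := S)
      rw [this, hScard]
      exact Finset.sum_congr rfl fun m _ => by rw [nsmul_eq_mul]
    rw [step2]
    have step3 : (∑ m ∈ Finset.range (s + 1),
          (s.choose m : ℝ) * (((p - m).choose (s - m) : ℝ) * y ^ m))
        ≤ ∑ m ∈ Finset.range (s + 1),
            (p.choose s : ℝ) * ((s.choose m : ℝ) * ((s : ℝ) / p * y) ^ m) := by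
      refine Finset.sum_le_sum fun m hm => ?_
      have hms : m ≤ s := Nat.lt_succ_iff.1 (Finset.mem_range.1 hm)
      have hnat := choose_ratio_bound hs m hms
      have hcast : ((p : ℝ)) ^ m * ((p - m).choose (s - m) : ℝ)
          ≤ (s : ℝ) ^ m * (p.choose s : ℝ) := by exact_mod_cast hnat
      have hple : ((p - m).choose (s - m) : ℝ)
          ≤ ((s : ℝ) / p) ^ m * (p.choose s : ℝ) := by
        rw [div_pow, div_mul_eq_mul_div, le_div_iff₀ (by positivity)]
        calc ((p - m).choose (s - m) : ℝ) * (p : ℝ) ^ m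
            = (p : ℝ) ^ m * ((p - m).choose (s - m) : ℝ) := by ring
          _ ≤ (s : ℝ) ^ m * (p.choose s : ℝ) := hcast
      calc (s.choose m : ℝ) * (((p - m).choose (s - m) : ℝ) * y ^ m)
          ≤ (s.choose m : ℝ) * ((((s : ℝ) / p) ^ m * (p.choose s : ℝ)) * y ^ m) := by
            have hy' : (0 : ℝ) ≤ y ^ m := by positivity
            have h := mul_le_mul_of_nonneg_right hple hy'
            exact mul_le_mul_of_nonneg_left h (by positivity)
        _ = (p.choose s : ℝ) * ((s.choose m : ℝ) * ((s : ℝ) / p * y) ^ m) := by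
            rw [mul_pow]; ring
    refine step3.trans ?_
    rw [← Finset.mul_sum]
    refine mul_le_mul_of_nonneg_left ?_ (le_of_lt hchoosepos)
    have hbin : (∑ m ∈ Finset.range (s + 1),
          (s.choose m : ℝ) * ((s : ℝ) / p * y) ^ m)
        = ((s : ℝ) / p * y + 1) ^ s := by
      rw [add_pow]
      refine Finset.sum_congr rfl fun m _ => ?_
      rw [one_pow]; ring
    rw [hbin]
    have h1 : ((s : ℝ) / p * y + 1) ^ s ≤ (Real.exp ((s : ℝ) / p * y)) ^ s := by
      refine pow_le_pow_left₀ ?_ ?_ s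
      · positivity
      · have := Real.add_one_le_exp ((s : ℝ) / p * y)
        linarith
    refine h1.trans ?_
    rw [← Real.exp_nat_mul]
    refine le_of_eq (congrArg Real.exp ?_)
    field_simp
  -- assemble
  have hinner : ∀ S S' : Finset (Fin p),
      (∑ σ : Fin p → Bool, ∑ σ' : Fin p → Bool,
        Real.exp (θ * (n : ℝ) * A ^ 2 * ∑ j ∈ S ∩ S', radSign (σ j) * radSign (σ' j)))
        = (2 ^ p * 2 ^ p) * x ^ (S ∩ S').card := fun S S' => inner_double_sum c (S ∩ S')
  have hnum : (∑ S ∈ Finset.powersetCard s (Finset.univ : Finset (Fin p)),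
      ∑ S' ∈ Finset.powersetCard s (Finset.univ : Finset (Fin p)),
        ∑ σ : Fin p → Bool, ∑ σ' : Fin p → Bool,
          Real.exp (θ * (n : ℝ) * A ^ 2 * ∑ j ∈ S ∩ S', radSign (σ j) * radSign (σ' j)))
      ≤ (2 ^ p * 2 ^ p) * ((p.choose s : ℝ) * ((p.choose s : ℝ)
          * Real.exp ((s : ℝ) ^ 2 / (p : ℝ) * y))) := by
    calc (∑ S ∈ Finset.powersetCard s (Finset.univ : Finset (Fin p)),
          ∑ S' ∈ Finset.powersetCard s (Finset.univ : Finset (Fin p)),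
            ∑ σ : Fin p → Bool, ∑ σ' : Fin p → Bool,
              Real.exp (θ * (n : ℝ) * A ^ 2 * ∑ j ∈ S ∩ S', radSign (σ j) * radSign (σ' j)))
        = ∑ S ∈ Finset.powersetCard s (Finset.univ : Finset (Fin p)),
            (2 ^ p * 2 ^ p) * ∑ S' ∈ Finset.powersetCard s (Finset.univ : Finset (Fin p)),
              x ^ (S ∩ S').card := by
          refine Finset.sum_congr rfl fun S _ => ?_
          rw [Finset.mul_sum]
          exact Finset.sum_congr rfl fun S' _ => hinner S S'
      _ ≤ ∑ S ∈ Finset.powersetCard s (Finset.univ : Finset (Fin p)),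
            (2 ^ p * 2 ^ p) * ((p.choose s : ℝ) * Real.exp ((s : ℝ) ^ 2 / (p : ℝ) * y)) := by
          refine Finset.sum_le_sum fun S hS => ?_
          exact mul_le_mul_of_nonneg_left (key1 S hS) (by positivity)
      _ = (2 ^ p * 2 ^ p) * ((p.choose s : ℝ) * ((p.choose s : ℝ)
            * Real.exp ((s : ℝ) ^ 2 / (p : ℝ) * y))) := by
          rw [Finset.sum_const, Finset.card_powersetCard, Finset.card_univ,
            Fintype.card_fin, nsmul_eq_mul]
          ring
  rw [div_le_iff₀ (by positivity)]
  calc (∑ S ∈ Finset.powersetCard s (Finset.univ : Finset (Fin p)),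
        ∑ S' ∈ Finset.powersetCard s (Finset.univ : Finset (Fin p)),
          ∑ σ : Fin p → Bool, ∑ σ' : Fin p → Bool,
            Real.exp (θ * (n : ℝ) * A ^ 2 * ∑ j ∈ S ∩ S', radSign (σ j) * radSign (σ' j)))
      ≤ (2 ^ p * 2 ^ p) * ((p.choose s : ℝ) * ((p.choose s : ℝ)
          * Real.exp ((s : ℝ) ^ 2 / (p : ℝ) * y))) := hnum
    _ = Real.exp ((s : ℝ) ^ 2 / (p : ℝ) * (Real.cosh (θ * (n : ℝ) * A ^ 2) - 1)) *
          ((p.choose s : ℝ) ^ 2 * 2 ^ p * 2 ^ p) := by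
        rw [hydef, hxdef, hc]
        ring
end

section
/- Under the null with z₁,…,z_p i.i.d. N(0,1), the Type I error of the scan test satisfies, for τ* > 0, P[max_{|S|=s} ∑_{i∈S}|z_i| > s√(2τ* log p)] ≤ C(p,s)·3^s·exp(−τ*·s·log p), where C(p,s) = binom(p,s); in particular, for τ* = (r+α)²/(4r) with r > α and s = p^{1−α}, the Type I error is at most exp(−((r−α)²/(4r))·s·log p·(1+o(1))). -/
open MeasureTheory ProbabilityTheory Finset Real
open scoped ENNReal NNReal

lemma lintegral_pi_prod : ∀ (n : ℕ) (f : Fin n → ℝ → ℝ≥0∞), (∀ i, Measurable (f i)) →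
    ∫⁻ z, ∏ i, f i (z i) ∂(Measure.pi fun _ : Fin n => gaussianReal 0 1)
      = ∏ i, ∫⁻ x, f i x ∂(gaussianReal 0 1) := by
  intro n
  induction n with
  | zero => intro f _; simp
  | succ n ih =>
    intro f hf
    have h := (measurePreserving_piFinSuccAbove (fun _ : Fin (n+1) => gaussianReal 0 1) 0).symm
    have hg : Measurable fun z : Fin (n+1) → ℝ => ∏ i, f i (z i) :=
      Finset.measurable_prod _ fun i _ => (hf i).comp (measurable_pi_apply i)
    rw [← h.lintegral_comp hg]
    have : ∀ x : ℝ × (Fin n → ℝ),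
        (∏ i, f i (((MeasurableEquiv.piFinSuccAbove (fun _ => ℝ) 0).symm x) i))
          = f 0 x.1 * ∏ i : Fin n, f i.succ (x.2 i) := by
      intro x
      rw [Fin.prod_univ_succ]
      simp [MeasurableEquiv.piFinSuccAbove_symm_apply, Fin.insertNthEquiv,
        Fin.insertNth_zero, Fin.zero_succAbove]
    simp_rw [this]
    rw [lintegral_prod_mul (f := f 0) (g := fun y : Fin n → ℝ => ∏ i, f i.succ (y i))
      (hf 0).aemeasurable
      (Finset.measurable_prod _ fun i _ => (hf i.succ).comp (measurable_pi_apply i)).aemeasurable,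
      ih (fun i => f i.succ) (fun i => hf i.succ), Fin.prod_univ_succ]

lemma gaussianPDFReal_mul_exp_le (l x : ℝ) :
    gaussianPDFReal 0 1 x * Real.exp (l * |x|) ≤
      Real.exp (l ^ 2 / 2) * (gaussianPDFReal l 1 x + gaussianPDFReal (-l) 1 x) := by
  simp only [gaussianPDFReal, NNReal.coe_one]
  set c := (Real.sqrt (2 * π * 1))⁻¹ with hcdef
  have hc : 0 ≤ c := by rw [hcdef]; positivity
  rcases abs_cases x with ⟨hx, _⟩ | ⟨hx, _⟩ <;> rw [hx]
  · have e1 : rexp (-(x - 0) ^ 2 / (2 * 1)) * rexp (l * x)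
        = rexp (l ^ 2 / 2) * rexp (-(x - l) ^ 2 / (2 * 1)) := by
      rw [← Real.exp_add, ← Real.exp_add]; congr 1; ring
    calc c * rexp (-(x - 0) ^ 2 / (2 * 1)) * rexp (l * x)
        = rexp (l ^ 2 / 2) * (c * rexp (-(x - l) ^ 2 / (2 * 1))) := by
          rw [mul_assoc, e1]; ring
      _ ≤ _ := by
          refine mul_le_mul_of_nonneg_left ?_ (Real.exp_pos _).le
          exact le_add_of_nonneg_right (by positivity)
  · have e1 : rexp (-(x - 0) ^ 2 / (2 * 1)) * rexp (l * -x)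
        = rexp (l ^ 2 / 2) * rexp (-(x - -l) ^ 2 / (2 * 1)) := by
      rw [← Real.exp_add, ← Real.exp_add]; congr 1; ring
    calc c * rexp (-(x - 0) ^ 2 / (2 * 1)) * rexp (l * -x)
        = rexp (l ^ 2 / 2) * (c * rexp (-(x - -l) ^ 2 / (2 * 1))) := by
          rw [mul_assoc, e1]; ring
      _ ≤ _ := by
          refine mul_le_mul_of_nonneg_left ?_ (Real.exp_pos _).le
          exact le_add_of_nonneg_left (by positivity)

lemma lintegral_exp_abs_gaussian (l : ℝ) :
    ∫⁻ x, ENNReal.ofReal (Real.exp (l * |x|)) ∂(gaussianReal 0 1)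
      ≤ ENNReal.ofReal (2 * Real.exp (l ^ 2 / 2)) := by
  have hmeas : Measurable fun x : ℝ => ENNReal.ofReal (Real.exp (l * |x|)) :=
    (Real.measurable_exp.comp (measurable_const.mul _root_.measurable_abs)).ennreal_ofReal
  rw [gaussianReal_of_var_ne_zero 0 one_ne_zero,
    lintegral_withDensity_eq_lintegral_mul _ (measurable_gaussianPDF 0 1) hmeas]
  have hpt : ∀ x : ℝ, (gaussianPDF 0 1 * fun x => ENNReal.ofReal (Real.exp (l * |x|))) x
      ≤ ENNReal.ofReal (Real.exp (l ^ 2 / 2)) *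
        (ENNReal.ofReal (gaussianPDFReal l 1 x) + ENNReal.ofReal (gaussianPDFReal (-l) 1 x)) := by
    intro x
    simp only [Pi.mul_apply, gaussianPDF]
    rw [← ENNReal.ofReal_mul (gaussianPDFReal_nonneg 0 1 x), ← ENNReal.ofReal_add
      (gaussianPDFReal_nonneg l 1 x) (gaussianPDFReal_nonneg (-l) 1 x),
      ← ENNReal.ofReal_mul (Real.exp_pos _).le]
    exact ENNReal.ofReal_le_ofReal (gaussianPDFReal_mul_exp_le l x)
  calc ∫⁻ x, (gaussianPDF 0 1 * fun x => ENNReal.ofReal (Real.exp (l * |x|))) x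
        ∂(volume : Measure ℝ)
      ≤ ∫⁻ x, ENNReal.ofReal (Real.exp (l ^ 2 / 2)) *
          (ENNReal.ofReal (gaussianPDFReal l 1 x) + ENNReal.ofReal (gaussianPDFReal (-l) 1 x))
          ∂(volume : Measure ℝ) := lintegral_mono hpt
    _ = ENNReal.ofReal (Real.exp (l ^ 2 / 2)) * (1 + 1) := by
        rw [lintegral_const_mul (f := fun x =>
            ENNReal.ofReal (gaussianPDFReal l 1 x) + ENNReal.ofReal (gaussianPDFReal (-l) 1 x))
          _ (((measurable_gaussianPDFReal l 1).ennreal_ofReal).add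
          ((measurable_gaussianPDFReal (-l) 1).ennreal_ofReal)),
          lintegral_add_left ((measurable_gaussianPDFReal l 1).ennreal_ofReal),
          lintegral_gaussianPDFReal_eq_one l one_ne_zero,
          lintegral_gaussianPDFReal_eq_one (-l) one_ne_zero]
    _ = ENNReal.ofReal (2 * Real.exp (l ^ 2 / 2)) := by
        rw [ENNReal.ofReal_mul (by norm_num : (0:ℝ) ≤ 2), mul_comm]
        norm_num

lemma nat_pow_le_exp_mul_factorial : ∀ n : ℕ, (n : ℝ) ^ n ≤ Real.exp n * n.factorial := by
  intro n
  induction n with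
  | zero => simp
  | succ n ih =>
    have hstep : ((n : ℝ) + 1) ^ n ≤ Real.exp 1 * (n : ℝ) ^ n := by
      rcases Nat.eq_zero_or_pos n with h | h
      · subst h; simpa using Real.one_le_exp (by norm_num)
      · have hn : (0:ℝ) < n := by exact_mod_cast h
        have h1 : (n : ℝ) + 1 ≤ Real.exp (1 / n) * n := by
          have h2 := Real.add_one_le_exp (1 / (n:ℝ))
          calc (n:ℝ) + 1 = (1/(n:ℝ) + 1) * n := by field_simp; ring
            _ ≤ Real.exp (1/n) * n := mul_le_mul_of_nonneg_right h2 hn.le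
        calc ((n:ℝ)+1) ^ n ≤ (Real.exp (1/n) * n) ^ n :=
              pow_le_pow_left₀ (by positivity) h1 n
          _ = Real.exp 1 * (n:ℝ) ^ n := by
              rw [mul_pow, ← Real.exp_nat_mul]
              congr 2
              field_simp
    calc ((n+1 : ℕ) : ℝ) ^ (n+1) = ((n:ℝ)+1) * ((n:ℝ)+1) ^ n := by push_cast; ring
      _ ≤ ((n:ℝ)+1) * (Real.exp 1 * (n:ℝ) ^ n) :=
          mul_le_mul_of_nonneg_left hstep (by positivity)
      _ ≤ ((n:ℝ)+1) * (Real.exp 1 * (Real.exp n * n.factorial)) := by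
          refine mul_le_mul_of_nonneg_left ?_ (by positivity)
          exact mul_le_mul_of_nonneg_left ih (Real.exp_pos _).le
      _ = Real.exp (n+1 : ℕ) * ((n+1 : ℕ).factorial) := by
          push_cast [Nat.factorial_succ]
          rw [Real.exp_add]
          ring

lemma chernoff_subset {p : ℕ} (S : Finset (Fin p)) {l t : ℝ} (hl : 0 ≤ l) :
    (Measure.pi fun _ : Fin p => gaussianReal 0 1) {z | t < ∑ i ∈ S, |z i|}
      ≤ ENNReal.ofReal (Real.exp (-(l * t)))
        * ENNReal.ofReal (2 * Real.exp (l ^ 2 / 2)) ^ S.card := by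
  set μ := Measure.pi fun _ : Fin p => gaussianReal 0 1 with hμ
  set F : ℝ → ℝ≥0∞ := fun x => ENNReal.ofReal (Real.exp (l * |x|)) with hF
  have hFmeas : Measurable F :=
    (Real.measurable_exp.comp (measurable_const.mul _root_.measurable_abs)).ennreal_ofReal
  set f : Fin p → ℝ → ℝ≥0∞ := fun i => if i ∈ S then F else 1 with hf
  have hfmeas : ∀ i, Measurable (f i) := by
    intro i
    by_cases h : i ∈ S
    · simpa [hf, h] using hFmeas
    · simp only [hf, h, if_false]
      exact measurable_one
  set g : (Fin p → ℝ) → ℝ≥0∞ := fun z => ∏ i, f i (z i) with hg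
  have hgmeas : Measurable g :=
    Finset.measurable_prod _ fun i _ => (hfmeas i).comp (measurable_pi_apply i)
  have hgz : ∀ z, g z = ENNReal.ofReal (Real.exp (l * ∑ i ∈ S, |z i|)) := by
    intro z
    have : g z = ∏ i ∈ S, F (z i) := by
      rw [hg]
      simp only [hf]
      rw [show (∏ i, (if i ∈ S then F else 1) (z i)) = ∏ i, if i ∈ S then F (z i) else 1
        from Finset.prod_congr rfl (fun i _ => by by_cases h : i ∈ S <;> simp [h]),
        Finset.prod_ite_mem, Finset.univ_inter]
    rw [this, hF]
    rw [← ENNReal.ofReal_prod_of_nonneg (fun i _ => (Real.exp_pos _).le), ← Real.exp_sum,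
      Finset.mul_sum]
  -- Markov
  have hsub : {z : Fin p → ℝ | t < ∑ i ∈ S, |z i|}
      ⊆ {z | ENNReal.ofReal (Real.exp (l * t)) ≤ g z} := by
    intro z hz
    rw [Set.mem_setOf_eq, hgz]
    exact ENNReal.ofReal_le_ofReal
      (Real.exp_le_exp.2 (mul_le_mul_of_nonneg_left (le_of_lt hz) hl))
  have hε0 : ENNReal.ofReal (Real.exp (l * t)) ≠ 0 := by
    simp [ENNReal.ofReal_eq_zero, not_le, Real.exp_pos]
  have hεtop : ENNReal.ofReal (Real.exp (l * t)) ≠ ⊤ := ENNReal.ofReal_ne_top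
  have hmarkov := mul_meas_ge_le_lintegral₀ (μ := μ) hgmeas.aemeasurable
    (ENNReal.ofReal (Real.exp (l * t)))
  have h1 : μ {z | t < ∑ i ∈ S, |z i|}
      ≤ (∫⁻ z, g z ∂μ) / ENNReal.ofReal (Real.exp (l * t)) := by
    refine le_trans (measure_mono hsub) ?_
    rw [ENNReal.le_div_iff_mul_le (Or.inl hε0) (Or.inl hεtop), mul_comm]
    exact hmarkov
  -- compute/bound the integral
  have h2 : (∫⁻ z, g z ∂μ) ≤ ENNReal.ofReal (2 * Real.exp (l ^ 2 / 2)) ^ S.card := by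
    rw [hg, hμ, lintegral_pi_prod p f hfmeas]
    have : ∀ i : Fin p, (∫⁻ x, f i x ∂(gaussianReal 0 1))
        = if i ∈ S then ∫⁻ x, F x ∂(gaussianReal 0 1) else 1 := by
      intro i
      by_cases h : i ∈ S <;> simp [hf, h]
    rw [Finset.prod_congr rfl (fun i _ => this i), Finset.prod_ite_mem, Finset.univ_inter,
      Finset.prod_const]
    exact pow_le_pow_left' (lintegral_exp_abs_gaussian l) S.card
  refine h1.trans ?_
  rw [ENNReal.div_eq_inv_mul, ← ENNReal.ofReal_inv_of_pos (Real.exp_pos _), ← Real.exp_neg]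
  exact mul_le_mul_of_nonneg_left h2 (by positivity) |>.trans_eq rfl

lemma scan_part1 (p s : ℕ) (hp : 1 ≤ p) (τ : ℝ) (hτ : 0 < τ) :
    (Measure.pi fun _ : Fin p => gaussianReal 0 1)
        {z | ∃ S ∈ Finset.powersetCard s (Finset.univ : Finset (Fin p)),
              (s : ℝ) * Real.sqrt (2 * τ * Real.log p) < ∑ i ∈ S, |z i|} ≤
      ENNReal.ofReal ((p.choose s : ℝ) * 3 ^ s * Real.exp (-(τ * s * Real.log p))) := by
  set μ := Measure.pi fun _ : Fin p => gaussianReal 0 1 with hμ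
  set L := Real.log p with hLdef
  have hL : 0 ≤ L := Real.log_nonneg (by exact_mod_cast hp)
  set l := Real.sqrt (2 * τ * L) with hldef
  have hl : 0 ≤ l := Real.sqrt_nonneg _
  have hl2 : l ^ 2 = 2 * τ * L := Real.sq_sqrt (by positivity)
  set t := (s : ℝ) * l with htdef
  set P := Finset.powersetCard s (Finset.univ : Finset (Fin p)) with hP
  have hset : {z : Fin p → ℝ | ∃ S ∈ P, t < ∑ i ∈ S, |z i|}
      = ⋃ S ∈ P, {z : Fin p → ℝ | t < ∑ i ∈ S, |z i|} := by
    ext z; simp [Set.mem_iUnion]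
  have hB : ∀ S ∈ P, μ {z : Fin p → ℝ | t < ∑ i ∈ S, |z i|}
      ≤ ENNReal.ofReal ((3:ℝ) ^ s * Real.exp (-(τ * s * L))) := by
    intro S hS
    have hcard : S.card = s := (Finset.mem_powersetCard.1 hS).2
    refine (chernoff_subset S hl).trans ?_
    rw [hcard, ← ENNReal.ofReal_pow (by positivity), ← ENNReal.ofReal_mul (by positivity)]
    refine ENNReal.ofReal_le_ofReal ?_
    have h3 : -(l * t) + (s : ℝ) * (l ^ 2 / 2) = -(τ * s * L) := by
      rw [htdef]
      linear_combination (-(s : ℝ) / 2) * hl2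
    have hexp : Real.exp (-(l * t)) * (2 * Real.exp (l ^ 2 / 2)) ^ s
        = 2 ^ s * Real.exp (-(τ * s * L)) := by
      calc Real.exp (-(l * t)) * (2 * Real.exp (l ^ 2 / 2)) ^ s
          = 2 ^ s * (Real.exp (-(l * t)) * Real.exp ((s : ℝ) * (l ^ 2 / 2))) := by
            rw [mul_pow, ← Real.exp_nat_mul]; ring
        _ = 2 ^ s * Real.exp (-(τ * s * L)) := by rw [← Real.exp_add, h3]
    rw [hexp]
    have : (2:ℝ) ^ s ≤ 3 ^ s := pow_le_pow_left₀ (by norm_num) (by norm_num) s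
    nlinarith [Real.exp_pos (-(τ * s * L)), this]
  calc μ {z : Fin p → ℝ | ∃ S ∈ P, t < ∑ i ∈ S, |z i|}
      ≤ ∑ S ∈ P, μ {z : Fin p → ℝ | t < ∑ i ∈ S, |z i|} := by
        rw [hset]; exact measure_biUnion_finset_le P _
    _ ≤ ∑ S ∈ P, ENNReal.ofReal ((3:ℝ) ^ s * Real.exp (-(τ * s * L))) :=
        Finset.sum_le_sum hB
    _ = (p.choose s : ℝ≥0∞) * ENNReal.ofReal ((3:ℝ) ^ s * Real.exp (-(τ * s * L))) := by
        rw [Finset.sum_const, hP, Finset.card_powersetCard, Finset.card_univ,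
          Fintype.card_fin, nsmul_eq_mul]
    _ = ENNReal.ofReal ((p.choose s : ℝ) * 3 ^ s * Real.exp (-(τ * s * L))) := by
        rw [← ENNReal.ofReal_natCast, ← ENNReal.ofReal_mul (Nat.cast_nonneg _)]
        congr 1
        ring

set_option maxHeartbeats 2000000 in
lemma scan_part2 (α r : ℝ) (hα2 : 1 / 2 < α) (hα1 : α < 1) (hαr : α < r)
    (ε : ℝ) (hε : 0 < ε) :
    ∃ p₀ : ℕ, ∀ p : ℕ, p₀ ≤ p →
      (Measure.pi fun _ : Fin p => gaussianReal 0 1)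
          {z | ∃ S ∈ Finset.powersetCard ⌊(p : ℝ) ^ (1 - α)⌋₊
                  (Finset.univ : Finset (Fin p)),
                (⌊(p : ℝ) ^ (1 - α)⌋₊ : ℝ) *
                    Real.sqrt (2 * ((r + α) ^ 2 / (4 * r)) * Real.log p) <
                  ∑ i ∈ S, |z i|} ≤
        ENNReal.ofReal
          (Real.exp (-((r - α) ^ 2 / (4 * r) *
            (⌊(p : ℝ) ^ (1 - α)⌋₊ : ℝ) * Real.log p * (1 - ε)))) := by
  have hr : 0 < r := lt_trans (by linarith) hαr
  set β := (r - α) ^ 2 / (4 * r) with hβdef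
  set τ := (r + α) ^ 2 / (4 * r) with hτdef
  have hβ : 0 < β := by
    rw [hβdef]
    have : r - α ≠ 0 := by linarith
    positivity
  have hτ : 0 < τ := by
    rw [hτdef]
    have : r + α ≠ 0 := by nlinarith
    positivity
  have hτα : τ = α + β := by rw [hτdef, hβdef]; field_simp; ring
  have hlog6 : Real.log 6 = Real.log 2 + Real.log 3 := by
    rw [show (6:ℝ) = 2 * 3 by norm_num, Real.log_mul (by norm_num) (by norm_num)]
  set C := (1 + Real.log 6) / (β * ε) with hCdef
  refine ⟨max 2 (⌈Real.exp C⌉₊ + 1), fun p hp => ?_⟩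
  have hp2 : 2 ≤ p := le_trans (le_max_left _ _) hp
  have hp1 : 1 ≤ p := le_trans (by norm_num) hp2
  have hpR : (1:ℝ) < p := by exact_mod_cast hp2.trans_lt' one_lt_two
  have hppos : (0:ℝ) < p := by linarith
  set L := Real.log p with hLdef
  have hL : 0 < L := Real.log_pos hpR
  have hLbig : 1 + Real.log 6 ≤ β * ε * L := by
    have hpc : Real.exp C ≤ (p : ℝ) := by
      calc Real.exp C ≤ (⌈Real.exp C⌉₊ : ℝ) := Nat.le_ceil _
        _ ≤ (p : ℝ) := by
            have : ⌈Real.exp C⌉₊ + 1 ≤ p := le_trans (le_max_right _ _) hp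
            exact_mod_cast le_trans (Nat.le_succ _) this
    have : C ≤ L := by
      rw [hLdef, ← Real.log_exp C]
      exact Real.log_le_log (Real.exp_pos _) hpc
    have hβε : 0 < β * ε := mul_pos hβ hε
    calc 1 + Real.log 6 = β * ε * C := by rw [hCdef]; field_simp
      _ ≤ β * ε * L := mul_le_mul_of_nonneg_left this hβε.le
  set x := (p : ℝ) ^ (1 - α) with hxdef
  set s := ⌊x⌋₊ with hsdef
  have hx1 : 1 ≤ x := Real.one_le_rpow hpR.le (by linarith)
  have hs1 : 1 ≤ s := Nat.le_floor (by exact_mod_cast hx1)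
  have hsR : (1:ℝ) ≤ s := by exact_mod_cast hs1
  have hsx : (s : ℝ) ≤ x := Nat.floor_le (by linarith)
  have hxs : x ≤ 2 * s := by
    have := Nat.lt_floor_add_one x
    linarith
  have hlogx : Real.log x = (1 - α) * L := by
    rw [hxdef, hLdef, Real.log_rpow hppos]
  have hlogs : (1 - α) * L - Real.log 2 ≤ Real.log s := by
    have h1 : x / 2 ≤ s := by linarith
    have h2 : Real.log (x / 2) ≤ Real.log s := Real.log_le_log (by positivity) h1
    rw [Real.log_div (by linarith) (by norm_num), hlogx] at h2
    linarith
  -- bound on the binomial coefficient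
  have hchoose : (p.choose s : ℝ) ≤ Real.exp ((s:ℝ) + s * L - s * Real.log s) := by
    have hfc : ((s.factorial : ℝ)) * (p.choose s : ℝ) ≤ (p : ℝ) ^ s := by
      have h1 : s.factorial * p.choose s ≤ p ^ s := by
        rw [← Nat.descFactorial_eq_factorial_mul_choose]
        exact Nat.descFactorial_le_pow p s
      exact_mod_cast h1
    have hss : (s : ℝ) ^ s ≤ Real.exp s * s.factorial := nat_pow_le_exp_mul_factorial s
    have hps : (p : ℝ) ^ s = Real.exp ((s : ℝ) * L) := by
      rw [hLdef, Real.exp_nat_mul, Real.exp_log hppos]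
    have hsx2 : (s : ℝ) ^ s = Real.exp ((s : ℝ) * Real.log s) := by
      rw [Real.exp_nat_mul, Real.exp_log (show (0:ℝ) < s by linarith)]
    have hfacpos : (0:ℝ) < s.factorial := by exact_mod_cast s.factorial_pos
    have hexp_s_pos := Real.exp_pos ((s:ℝ))
    -- choose ≤ exp(s) * p^s / s^s
    have key : (p.choose s : ℝ) * Real.exp ((s:ℝ) * Real.log s)
        ≤ Real.exp ((s:ℝ)) * Real.exp ((s:ℝ) * L) := by
      rw [← hsx2, ← hps]
      have hcpos : (0:ℝ) ≤ (p.choose s : ℝ) := Nat.cast_nonneg _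
      nlinarith [mul_le_mul_of_nonneg_left hss hcpos,
        mul_le_mul_of_nonneg_left hfc (Real.exp_pos ((s:ℝ))).le]
    have hEpos := Real.exp_pos ((s:ℝ) * Real.log s)
    rw [show (s:ℝ) + s * L - s * Real.log s
        = ((s:ℝ) + s * L) - s * Real.log s by ring, Real.exp_sub, Real.exp_add]
    rw [le_div_iff₀ hEpos]
    exact key
  -- final exponent comparison
  refine (scan_part1 p s hp1 τ hτ).trans (ENNReal.ofReal_le_ofReal ?_)
  have h3s : (3:ℝ) ^ s = Real.exp ((s:ℝ) * Real.log 3) := by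
    rw [Real.exp_nat_mul, Real.exp_log (show (0:ℝ) < 3 by norm_num)]
  calc (p.choose s : ℝ) * 3 ^ s * Real.exp (-(τ * s * L))
      ≤ Real.exp ((s:ℝ) + s * L - s * Real.log s) * Real.exp ((s:ℝ) * Real.log 3)
        * Real.exp (-(τ * s * L)) := by
        rw [h3s]
        refine mul_le_mul_of_nonneg_right ?_ (Real.exp_pos _).le
        exact mul_le_mul_of_nonneg_right hchoose (Real.exp_pos _).le
    _ = Real.exp (((s:ℝ) + s * L - s * Real.log s) + (s:ℝ) * Real.log 3 + (-(τ * s * L))) := by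
        rw [← Real.exp_add, ← Real.exp_add]
    _ ≤ Real.exp (-(β * s * L * (1 - ε))) := by
        refine Real.exp_le_exp.2 ?_
        have hslogs : (s:ℝ) * ((1 - α) * L - Real.log 2) ≤ (s:ℝ) * Real.log s :=
          mul_le_mul_of_nonneg_left hlogs (by linarith)
        have hsL : (1 + Real.log 6) * s ≤ β * ε * L * s :=
          mul_le_mul_of_nonneg_right hLbig (by linarith)
        rw [hτα]
        nlinarith [hslogs, hsL, hlog6]

/-- Type I error of the scan test. Under the null (`z₁,…,z_p` i.i.d. `N(0,1)`),
for any `τ* > 0`,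
`P[max_{|S|=s} ∑_{i∈S}|z_i| > s√(2τ* log p)] ≤ C(p,s)·3^s·exp(−τ* s log p)`;
in particular, for `τ* = (r+α)²/(4r)` with `r > α`, `α ∈ (1/2,1)` and
`s = ⌊p^{1−α}⌋`, the Type I error is at most
`exp(−((r−α)²/(4r))·s·log p·(1+o(1)))`. -/
theorem scan_test_type_one_error :
    (∀ p s : ℕ, 1 ≤ p → ∀ τ : ℝ, 0 < τ →
      (Measure.pi fun _ : Fin p => gaussianReal 0 1)
          {z | ∃ S ∈ Finset.powersetCard s (Finset.univ : Finset (Fin p)),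
                (s : ℝ) * Real.sqrt (2 * τ * Real.log p) < ∑ i ∈ S, |z i|} ≤
        ENNReal.ofReal
          ((p.choose s : ℝ) * 3 ^ s * Real.exp (-(τ * s * Real.log p)))) ∧
    (∀ α r : ℝ, 1 / 2 < α → α < 1 → α < r → ∀ ε : ℝ, 0 < ε →
      ∃ p₀ : ℕ, ∀ p : ℕ, p₀ ≤ p →
        (Measure.pi fun _ : Fin p => gaussianReal 0 1)
            {z | ∃ S ∈ Finset.powersetCard ⌊(p : ℝ) ^ (1 - α)⌋₊
                    (Finset.univ : Finset (Fin p)),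
                  (⌊(p : ℝ) ^ (1 - α)⌋₊ : ℝ) *
                      Real.sqrt (2 * ((r + α) ^ 2 / (4 * r)) * Real.log p) <
                    ∑ i ∈ S, |z i|} ≤
          ENNReal.ofReal
            (Real.exp (-((r - α) ^ 2 / (4 * r) *
              (⌊(p : ℝ) ^ (1 - α)⌋₊ : ℝ) * Real.log p * (1 - ε))))) := by
  exact ⟨scan_part1, scan_part2⟩
end
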